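/- arXiv:math/0504480 — 4 statements merged into one kernel-verified Lean document; each statement's English description precedes it below -/
import Mathlib

section
/- Let 0 < q₁ < q₂ and f : [0,∞) → (0,∞). If D^{(q)}(r + log 2 | q₁) ∼ f(r) and D^{(q)}(r | q₂) ∼ f(r) as r → ∞, then for every ε > 0, lim_{r→∞} sup_{C ⊂ Ê, |C| ≤ e^r} ℙ( d(X,C) ≤ (1−ε) f(r) ) = 0. -/
open MeasureTheory ProbabilityTheory Filter Set Topology
open scoped ENNReal NNReal

noncomputable section

/-- The entropy `ℍ(Y) = −Σ_w ℙ(Y = w) log ℙ(Y = w)` of a discrete random variable. -/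
def entropy {Ω α : Type*} [MeasurableSpace Ω] (P : Measure Ω) (Y : Ω → α) : ℝ≥0∞ :=
  ∑' w : α, ENNReal.ofReal (Real.negMulLog (P {ω | Y ω = w}).toReal)

variable {Ω E F : Type*} [MeasurableSpace Ω] [MeasurableSpace E] [MeasurableSpace F]

/-- `d(x, C) = inf_{y ∈ C} d(x, y)`, the distance of `x` to a codebook `C`. -/
def dSet (d : E → F → ℝ) (x : E) (C : Finset F) : ℝ≥0∞ :=
  ⨅ y ∈ C, ENNReal.ofReal (d x y)

/-- The quantization error `D^{(q)}(r|q)`: the infimum of `𝔼[d(X,C)^q]^{1/q}` over all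
codebooks `C ⊂ F` with at most `e^r` elements. -/
def Dquant (P : Measure Ω) (d : E → F → ℝ) (X : Ω → E) (r q : ℝ) : ℝ≥0∞ :=
  ⨅ (C : Finset F) (_ : (C.card : ℝ) ≤ Real.exp r),
    (∫⁻ ω, (dSet d (X ω) C) ^ q ∂P) ^ (1/q)

/-- The entropy coding error `D^{(e)}(r|q)`: the infimum of `𝔼[d(X,X̂)^q]^{1/q}` over all
discrete `F`-valued random variables `X̂` with entropy `ℍ(X̂) ≤ r`. -/
def Dent (P : Measure Ω) (d : E → F → ℝ) (X : Ω → E) (r q : ℝ) : ℝ≥0∞ :=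
  ⨅ (Y : Ω → F) (_ : (Set.range Y).Countable ∧ (∀ w, MeasurableSet {ω | Y ω = w}) ∧
      entropy P Y ≤ ENNReal.ofReal r),
    (∫⁻ ω, (ENNReal.ofReal (d (X ω) (Y ω))) ^ q ∂P) ^ (1/q)

section Aux

set_option linter.unusedSectionVars false

lemma measurable_dSet (d : E → F → ℝ) (hd : Measurable fun x : E × F => d x.1 x.2)
    (X : Ω → E) (hX : Measurable X) (C : Finset F) :
    Measurable fun ω => dSet d (X ω) C := by
  simp only [dSet]
  rw [show (fun ω => ⨅ y ∈ C, ENNReal.ofReal (d (X ω) y)) =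
      fun ω => ⨅ y : C, ENNReal.ofReal (d (X ω) y) from by
    funext ω; rw [iInf_subtype']]
  exact Measurable.iInf fun y =>
    ENNReal.measurable_ofReal.comp (hd.comp (hX.prodMk measurable_const))

lemma dSet_anti (d : E → F → ℝ) (x : E) {C D : Finset F} (h : C ⊆ D) :
    dSet d x D ≤ dSet d x C := by
  simp only [dSet]
  exact biInf_mono fun y hy => h hy

lemma amgm_real {t : ℝ} (ht0 : 0 < t) (ht1 : t ≤ 1) {u : ℝ} (hu : 0 ≤ u) :
    u ^ t ≤ (1 - t) + t * u := by
  calc u ^ t = (1 + (u-1)) ^ t := by ring_nf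
    _ ≤ 1 + t * (u - 1) := by
        have := rpow_one_add_le_one_add_mul_self (s := u - 1) (by linarith) ht0.le ht1
        linarith [this]
    _ = (1 - t) + t * u := by ring

lemma key_real1 {q₁ q₂ : ℝ} (hq₁ : 0 < q₁) (h12 : q₁ < q₂) {x : ℝ} (hx0 : 0 ≤ x) :
    x ^ q₁ ≤ (1 - q₁/q₂) + (q₁/q₂) * x ^ q₂ := by
  have hq₂ : 0 < q₂ := hq₁.trans h12
  have ht0 : 0 < q₁/q₂ := div_pos hq₁ hq₂
  have ht1 : q₁/q₂ ≤ 1 := (div_le_one hq₂).2 h12.le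
  have h1 : x ^ q₁ = (x ^ q₂) ^ (q₁/q₂) := by
    rw [← Real.rpow_mul hx0]
    congr 1
    field_simp
  rw [h1]
  exact amgm_real ht0 ht1 (Real.rpow_nonneg hx0 _)

lemma key_real2 {q₁ q₂ : ℝ} (hq₁ : 0 < q₁) (h12 : q₁ < q₂) {a : ℝ} (ha0 : 0 < a) (ha1 : a < 1)
    {x : ℝ} (hx0 : 0 ≤ x) (hxa : x ≤ a) :
    x ^ q₁ + ((1 - q₁/q₂) + (q₁/q₂) * a ^ q₂ - a ^ q₁)
      ≤ (1 - q₁/q₂) + (q₁/q₂) * x ^ q₂ := by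
  have hq₂ : 0 < q₂ := hq₁.trans h12
  have ht0 : 0 < q₁/q₂ := div_pos hq₁ hq₂
  have ht1 : q₁/q₂ ≤ 1 := (div_le_one hq₂).2 h12.le
  set t := q₁/q₂ with htdef
  set s := x / a with hsdef
  have hs0 : 0 ≤ s := div_nonneg hx0 ha0.le
  have hs1 : s ≤ 1 := (div_le_one ha0).2 hxa
  have hxas : x = a * s := by rw [hsdef]; field_simp [ha0.ne']
  have hxq₁ : x ^ q₁ = a ^ q₁ * s ^ q₁ := by rw [hxas, Real.mul_rpow ha0.le hs0]
  have hxq₂ : x ^ q₂ = a ^ q₂ * s ^ q₂ := by rw [hxas, Real.mul_rpow ha0.le hs0]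
  have hAs : s ^ q₁ ≤ (1 - t) + t * s ^ q₂ := key_real1 hq₁ h12 hs0
  have haq : a ^ q₂ ≤ a ^ q₁ := Real.rpow_le_rpow_of_exponent_ge ha0 ha1.le h12.le
  have hvle1 : s ^ q₂ ≤ 1 := Real.rpow_le_one hs0 hs1 hq₂.le
  have hule1 : s ^ q₁ ≤ 1 := Real.rpow_le_one hs0 hs1 hq₁.le
  have haq2nn : 0 ≤ a ^ q₂ := Real.rpow_nonneg ha0.le _
  rw [hxq₁, hxq₂]
  nlinarith [mul_nonneg (sub_nonneg.2 haq) (sub_nonneg.2 hule1),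
    mul_nonneg haq2nn (sub_nonneg.2 (show s ^ q₁ ≤ (1-t) + t * s ^ q₂ from hAs)),
    mul_le_mul_of_nonneg_left hAs haq2nn]

lemma key_enn1 {q₁ q₂ : ℝ} (hq₁ : 0 < q₁) (h12 : q₁ < q₂) (v : ℝ≥0∞) :
    v ^ q₁ ≤ ENNReal.ofReal (1 - q₁/q₂) + ENNReal.ofReal (q₁/q₂) * v ^ q₂ := by
  have hq₂ : 0 < q₂ := hq₁.trans h12
  have ht0 : 0 < q₁/q₂ := div_pos hq₁ hq₂
  have ht1 : q₁/q₂ ≤ 1 := (div_le_one hq₂).2 h12.le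
  rcases eq_or_ne v ⊤ with rfl | hv
  · rw [ENNReal.top_rpow_of_pos hq₂, ENNReal.mul_top (ENNReal.ofReal_pos.2 ht0).ne',
      add_top]
    exact le_top
  · have hx0 : 0 ≤ v.toReal := ENNReal.toReal_nonneg
    conv_lhs => rw [← ENNReal.ofReal_toReal hv]
    conv_rhs => rw [← ENNReal.ofReal_toReal hv]
    rw [ENNReal.ofReal_rpow_of_nonneg hx0 hq₁.le, ENNReal.ofReal_rpow_of_nonneg hx0 hq₂.le,
      ← ENNReal.ofReal_mul ht0.le,
      ← ENNReal.ofReal_add (by linarith) (by positivity)]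
    exact ENNReal.ofReal_le_ofReal (key_real1 hq₁ h12 hx0)

lemma key_enn2 {q₁ q₂ : ℝ} (hq₁ : 0 < q₁) (h12 : q₁ < q₂) {a : ℝ} (ha0 : 0 < a) (ha1 : a < 1)
    {v : ℝ≥0∞} (hva : v ≤ ENNReal.ofReal a) :
    v ^ q₁ + ENNReal.ofReal ((1 - q₁/q₂) + (q₁/q₂) * a ^ q₂ - a ^ q₁)
      ≤ ENNReal.ofReal (1 - q₁/q₂) + ENNReal.ofReal (q₁/q₂) * v ^ q₂ := by
  have hq₂ : 0 < q₂ := hq₁.trans h12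
  have ht0 : 0 < q₁/q₂ := div_pos hq₁ hq₂
  have ht1 : q₁/q₂ ≤ 1 := (div_le_one hq₂).2 h12.le
  have hc₀ : 0 ≤ (1 - q₁/q₂) + (q₁/q₂) * a ^ q₂ - a ^ q₁ := by
    have := key_real1 hq₁ h12 ha0.le
    linarith
  have hv : v ≠ ⊤ := ne_top_of_le_ne_top ENNReal.ofReal_ne_top hva
  have hx0 : 0 ≤ v.toReal := ENNReal.toReal_nonneg
  have hxa : v.toReal ≤ a := ENNReal.toReal_le_of_le_ofReal ha0.le hva
  conv_lhs => rw [← ENNReal.ofReal_toReal hv]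
  conv_rhs => rw [← ENNReal.ofReal_toReal hv]
  rw [ENNReal.ofReal_rpow_of_nonneg hx0 hq₁.le, ENNReal.ofReal_rpow_of_nonneg hx0 hq₂.le,
    ← ENNReal.ofReal_add (by positivity) hc₀,
    ← ENNReal.ofReal_mul ht0.le,
    ← ENNReal.ofReal_add (by linarith) (by positivity)]
  exact ENNReal.ofReal_le_ofReal (key_real2 hq₁ h12 ha0 ha1 hx0 hxa)

lemma integral_step (P : Measure Ω) [IsProbabilityMeasure P]
    {q₁ q₂ : ℝ} (hq₁ : 0 < q₁) (h12 : q₁ < q₂) {a : ℝ} (ha0 : 0 < a) (ha1 : a < 1)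
    {V : Ω → ℝ≥0∞} (hV : Measurable V) :
    (∫⁻ ω, V ω ^ q₁ ∂P) + ENNReal.ofReal ((1 - q₁/q₂) + (q₁/q₂) * a ^ q₂ - a ^ q₁)
        * P {ω | V ω ≤ ENNReal.ofReal a}
      ≤ ENNReal.ofReal (1 - q₁/q₂) + ENNReal.ofReal (q₁/q₂) * ∫⁻ ω, V ω ^ q₂ ∂P := by
  have hm1 : Measurable fun ω => V ω ^ q₁ := ENNReal.continuous_rpow_const.measurable.comp hV
  have hm2 : Measurable fun ω => V ω ^ q₂ := ENNReal.continuous_rpow_const.measurable.comp hV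
  have hA : MeasurableSet {ω | V ω ≤ ENNReal.ofReal a} := measurableSet_le hV measurable_const
  have e1 : (∫⁻ ω, V ω ^ q₁ ∂P) + ENNReal.ofReal ((1 - q₁/q₂) + (q₁/q₂) * a ^ q₂ - a ^ q₁)
        * P {ω | V ω ≤ ENNReal.ofReal a}
      = ∫⁻ ω, (V ω ^ q₁ + ({ω | V ω ≤ ENNReal.ofReal a}).indicator
          (fun _ => ENNReal.ofReal ((1 - q₁/q₂) + (q₁/q₂) * a ^ q₂ - a ^ q₁)) ω) ∂P := by
    rw [lintegral_add_left hm1, lintegral_indicator hA, setLIntegral_const]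
  rw [e1]
  calc ∫⁻ ω, (V ω ^ q₁ + ({ω | V ω ≤ ENNReal.ofReal a}).indicator
          (fun _ => ENNReal.ofReal ((1 - q₁/q₂) + (q₁/q₂) * a ^ q₂ - a ^ q₁)) ω) ∂P
      ≤ ∫⁻ ω, (ENNReal.ofReal (1 - q₁/q₂) + ENNReal.ofReal (q₁/q₂) * V ω ^ q₂) ∂P := by
        refine lintegral_mono fun ω => ?_
        by_cases h : ω ∈ {ω | V ω ≤ ENNReal.ofReal a}
        · rw [Set.indicator_of_mem h]
          exact key_enn2 hq₁ h12 ha0 ha1 h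
        · rw [Set.indicator_of_notMem h, add_zero]
          exact key_enn1 hq₁ h12 _
    _ = _ := by
        rw [lintegral_add_left measurable_const, lintegral_const_mul _ hm2, lintegral_const,
          measure_univ, mul_one]

end Aux

lemma main_aux (P : Measure Ω) [IsProbabilityMeasure P]
    (d : E → F → ℝ) (hd : Measurable fun x : E × F => d x.1 x.2)
    (X : Ω → E) (hX : Measurable X)
    (f : ℝ → ℝ) (hfpos : ∀ r, 0 ≤ r → 0 < f r)
    (q₁ q₂ : ℝ) (hq₁ : 0 < q₁) (hq₁₂ : q₁ < q₂)
    (h1 : Tendsto (fun r : ℝ => Dquant P d X (r + Real.log 2) q₁ / ENNReal.ofReal (f r))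
      atTop (𝓝 1))
    (h2 : Tendsto (fun r : ℝ => Dquant P d X r q₂ / ENNReal.ofReal (f r)) atTop (𝓝 1))
    {ε : ℝ} (hε : 0 < ε) (hε1 : ε < 1) :
    Tendsto (fun r : ℝ =>
        ⨆ (C : Finset F) (_ : (C.card : ℝ) ≤ Real.exp r),
          P {ω | dSet d (X ω) C ≤ ENNReal.ofReal ((1 - ε) * f r)})
      atTop (𝓝 0) := by
  classical
  have hq₂ : 0 < q₂ := hq₁.trans hq₁₂
  have ht0 : 0 < q₁/q₂ := div_pos hq₁ hq₂
  have ht1 : q₁/q₂ < 1 := (div_lt_one hq₂).2 hq₁₂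
  set a : ℝ := 1 - ε with ha
  have ha0 : 0 < a := by simp [ha]; linarith
  have ha1 : a < 1 := by simp [ha]; linarith
  set c₀ : ℝ := (1 - q₁/q₂) + (q₁/q₂) * a ^ q₂ - a ^ q₁ with hc₀def
  have hc₀pos : 0 < c₀ := by
    have hu1 : a ^ q₂ < 1 := Real.rpow_lt_one ha0.le ha1 hq₂
    have hu0 : 0 < a ^ q₂ := Real.rpow_pos_of_pos ha0 _
    have heq : a ^ q₁ = (a ^ q₂) ^ (q₁/q₂) := by
      rw [← Real.rpow_mul ha0.le]
      congr 1
      field_simp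
    have hb : (1 + (a ^ q₂ - 1)) ^ (q₁/q₂) < 1 + (q₁/q₂) * (a ^ q₂ - 1) :=
      rpow_one_add_lt_one_add_mul_self (by linarith) (by linarith) ht0 ht1
    have : a ^ q₁ < 1 + (q₁/q₂) * (a ^ q₂ - 1) := by
      rw [heq]
      calc (a ^ q₂) ^ (q₁/q₂) = (1 + (a ^ q₂ - 1)) ^ (q₁/q₂) := by ring_nf
        _ < 1 + (q₁/q₂) * (a ^ q₂ - 1) := hb
    rw [hc₀def]
    nlinarith
  rw [ENNReal.tendsto_nhds_zero]
  intro δ hδ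
  rcases eq_or_ne δ ⊤ with rfl | hδtop
  · exact Eventually.of_forall fun r => le_top
  set δ₀ : ℝ := δ.toReal with hδ₀def
  have hδ₀pos : 0 < δ₀ := ENNReal.toReal_pos hδ.ne' hδtop
  -- choose η
  have hcont : ContinuousAt
      (fun η : ℝ => (1 - q₁/q₂) + q₁/q₂ * (1 + 2*η) ^ q₂ - (1 - η) ^ q₁) 0 := by
    apply ContinuousAt.sub
    · apply ContinuousAt.add continuousAt_const
      apply ContinuousAt.mul continuousAt_const
      exact ContinuousAt.rpow_const (by fun_prop) (Or.inl (by norm_num))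
    · exact ContinuousAt.rpow_const (by fun_prop) (Or.inl (by norm_num))
  have hval0 : (1 - q₁/q₂) + q₁/q₂ * (1 + 2*(0:ℝ)) ^ q₂ - (1 - (0:ℝ)) ^ q₁ < c₀ * δ₀ := by
    norm_num [Real.one_rpow]
    positivity
  have hev : ∀ᶠ η in 𝓝 (0:ℝ),
      (1 - q₁/q₂) + q₁/q₂ * (1 + 2*η) ^ q₂ - (1 - η) ^ q₁ < c₀ * δ₀ :=
    hcont.eventually_lt_const hval0
  have hhalf : ∀ᶠ η in 𝓝 (0:ℝ), η < 1/2 := eventually_lt_nhds (by norm_num)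
  have hcomb : ∀ᶠ η in 𝓝[>] (0:ℝ),
      ((1 - q₁/q₂) + q₁/q₂ * (1 + 2*η) ^ q₂ - (1 - η) ^ q₁ < c₀ * δ₀ ∧ η < 1/2) ∧ 0 < η :=
    ((hev.and hhalf).filter_mono nhdsWithin_le_nhds).and
      (eventually_mem_nhdsWithin.mono fun x hx => Set.mem_Ioi.1 hx)
  obtain ⟨η, ⟨hηδ, hηhalf⟩, hη0⟩ := hcomb.exists
  -- eventual bounds from h1 h2
  have e1 : ∀ᶠ r in atTop,
      ENNReal.ofReal (1 - η) < Dquant P d X (r + Real.log 2) q₁ / ENNReal.ofReal (f r) :=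
    h1.eventually (eventually_gt_nhds (ENNReal.ofReal_lt_one.2 (by linarith)))
  have e2 : ∀ᶠ r in atTop,
      Dquant P d X r q₂ / ENNReal.ofReal (f r) < ENNReal.ofReal (1 + 2*η) :=
    h2.eventually (eventually_lt_nhds (ENNReal.one_lt_ofReal.2 (by linarith)))
  filter_upwards [e1, e2, eventually_ge_atTop (0:ℝ)] with r hr1 hr2 hr0
  set g : ℝ≥0∞ := ENNReal.ofReal (f r) with hgdef
  have hfr : 0 < f r := hfpos r hr0
  have hg0 : g ≠ 0 := by simp [hgdef, ENNReal.ofReal_eq_zero]; linarith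
  have hgtop : g ≠ ⊤ := ENNReal.ofReal_ne_top
  have hDlow : ENNReal.ofReal (1 - η) * g ≤ Dquant P d X (r + Real.log 2) q₁ := by
    rw [← ENNReal.le_div_iff_mul_le (Or.inl hg0) (Or.inl hgtop)]
    exact hr1.le
  have hDhigh : Dquant P d X r q₂ < ENNReal.ofReal (1 + 2*η) * g := by
    rwa [ENNReal.div_lt_iff (Or.inl hg0) (Or.inl hgtop)] at hr2
  -- goal: sup ≤ δ
  rw [← ENNReal.ofReal_toReal hδtop]
  refine iSup_le fun C => iSup_le fun hC => ?_
  -- pick C'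
  simp only [Dquant] at hDhigh
  obtain ⟨C', hC'⟩ := iInf_lt_iff.1 hDhigh
  obtain ⟨hcard', hval'⟩ := iInf_lt_iff.1 hC'
  set D := C ∪ C' with hDdef
  have hcardD : ((D.card : ℝ)) ≤ Real.exp (r + Real.log 2) := by
    rw [Real.exp_add, Real.exp_log two_pos]
    have h1 : (D.card : ℝ) ≤ (C.card : ℝ) + (C'.card : ℝ) := by
      exact_mod_cast Finset.card_union_le C C'
    linarith
  set W : Ω → ℝ≥0∞ := fun ω => dSet d (X ω) D with hWdef
  have hWmeas : Measurable W := measurable_dSet d hd X hX D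
  set V : Ω → ℝ≥0∞ := fun ω => W ω * g⁻¹ with hVdef
  have hVmeas : Measurable V := hWmeas.mul_const _
  have hginv : g⁻¹ ≠ ⊤ := by simp [hg0]
  have hgg : ∀ q : ℝ, 0 < q → g ^ q * (g⁻¹) ^ q = 1 := fun q hq => by
    rw [← ENNReal.mul_rpow_of_nonneg _ _ hq.le, ENNReal.mul_inv_cancel hg0 hgtop,
      ENNReal.one_rpow]
  -- lower bound on ∫ V^q₁
  have hDleD : Dquant P d X (r + Real.log 2) q₁ ≤ (∫⁻ ω, W ω ^ q₁ ∂P) ^ (1/q₁) := by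
    simp only [Dquant]
    exact iInf₂_le D hcardD
  have hWlow : (ENNReal.ofReal (1 - η) * g) ^ q₁ ≤ ∫⁻ ω, W ω ^ q₁ ∂P := by
    calc (ENNReal.ofReal (1 - η) * g) ^ q₁
        ≤ ((∫⁻ ω, W ω ^ q₁ ∂P) ^ (1/q₁)) ^ q₁ :=
          ENNReal.rpow_le_rpow (hDlow.trans hDleD) hq₁.le
      _ = ∫⁻ ω, W ω ^ q₁ ∂P := by
          rw [← ENNReal.rpow_mul, one_div, inv_mul_cancel₀ hq₁.ne', ENNReal.rpow_one]
  have hVint1 : ∀ q : ℝ, 0 < q → (∫⁻ ω, V ω ^ q ∂P) = (∫⁻ ω, W ω ^ q ∂P) * (g⁻¹) ^ q := by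
    intro q hq
    simp only [hVdef]
    have hm : Measurable fun ω => W ω ^ q := ENNReal.continuous_rpow_const.measurable.comp hWmeas
    rw [← lintegral_mul_const _ hm]
    congr 1
    funext ω
    rw [ENNReal.mul_rpow_of_nonneg _ _ hq.le]
  have hlow : ENNReal.ofReal ((1 - η) ^ q₁) ≤ ∫⁻ ω, V ω ^ q₁ ∂P := by
    rw [hVint1 q₁ hq₁]
    calc ENNReal.ofReal ((1 - η) ^ q₁)
        = (ENNReal.ofReal (1 - η)) ^ q₁ * (g ^ q₁ * (g⁻¹) ^ q₁) := by
          rw [hgg q₁ hq₁, mul_one, ENNReal.ofReal_rpow_of_nonneg (by linarith) hq₁.le]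
      _ = (ENNReal.ofReal (1 - η) * g) ^ q₁ * (g⁻¹) ^ q₁ := by
          rw [ENNReal.mul_rpow_of_nonneg _ _ hq₁.le]; ring
      _ ≤ (∫⁻ ω, W ω ^ q₁ ∂P) * (g⁻¹) ^ q₁ :=
          mul_le_mul_left hWlow _
  -- upper bound on ∫ V^q₂
  have hWhigh : ∫⁻ ω, W ω ^ q₂ ∂P ≤ (ENNReal.ofReal (1 + 2*η) * g) ^ q₂ := by
    have hmono : (∫⁻ ω, W ω ^ q₂ ∂P) ≤ ∫⁻ ω, dSet d (X ω) C' ^ q₂ ∂P := by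
      refine lintegral_mono fun ω => ?_
      exact ENNReal.rpow_le_rpow (dSet_anti d (X ω) Finset.subset_union_right) hq₂.le
    refine hmono.trans ?_
    calc (∫⁻ ω, dSet d (X ω) C' ^ q₂ ∂P)
        = ((∫⁻ ω, dSet d (X ω) C' ^ q₂ ∂P) ^ (1/q₂)) ^ q₂ := by
          rw [← ENNReal.rpow_mul, one_div, inv_mul_cancel₀ hq₂.ne', ENNReal.rpow_one]
      _ ≤ (ENNReal.ofReal (1 + 2*η) * g) ^ q₂ := ENNReal.rpow_le_rpow hval'.le hq₂.le
  have hhigh : (∫⁻ ω, V ω ^ q₂ ∂P) ≤ ENNReal.ofReal ((1 + 2*η) ^ q₂) := by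
    rw [hVint1 q₂ hq₂]
    calc (∫⁻ ω, W ω ^ q₂ ∂P) * (g⁻¹) ^ q₂
        ≤ (ENNReal.ofReal (1 + 2*η) * g) ^ q₂ * (g⁻¹) ^ q₂ := mul_le_mul_left hWhigh _
      _ = (ENNReal.ofReal (1 + 2*η)) ^ q₂ * (g ^ q₂ * (g⁻¹) ^ q₂) := by
          rw [ENNReal.mul_rpow_of_nonneg _ _ hq₂.le]; ring
      _ = ENNReal.ofReal ((1 + 2*η) ^ q₂) := by
          rw [hgg q₂ hq₂, mul_one, ENNReal.ofReal_rpow_of_nonneg (by linarith) hq₂.le]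
  -- A ⊆ {V ≤ a}
  have hsub : {ω | dSet d (X ω) C ≤ ENNReal.ofReal (a * f r)}
      ⊆ {ω | V ω ≤ ENNReal.ofReal a} := by
    intro ω hω
    simp only [Set.mem_setOf_eq] at hω ⊢
    have hWC : W ω ≤ dSet d (X ω) C := dSet_anti d (X ω) Finset.subset_union_left
    have hWa : W ω ≤ ENNReal.ofReal a * g := by
      rw [hgdef, ← ENNReal.ofReal_mul ha0.le]
      exact hWC.trans hω
    calc V ω = W ω * g⁻¹ := rfl
      _ ≤ ENNReal.ofReal a * g * g⁻¹ := mul_le_mul_left hWa _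
      _ = ENNReal.ofReal a := by
          rw [mul_assoc, ENNReal.mul_inv_cancel hg0 hgtop, mul_one]
  -- combine via integral step
  have hstep := integral_step P hq₁ hq₁₂ ha0 ha1 hVmeas
  have hPAle : ENNReal.ofReal ((1 - η) ^ q₁) + ENNReal.ofReal c₀ *
      P {ω | dSet d (X ω) C ≤ ENNReal.ofReal (a * f r)}
      ≤ ENNReal.ofReal (1 - q₁/q₂) + ENNReal.ofReal (q₁/q₂) * ENNReal.ofReal ((1 + 2*η) ^ q₂) := by
    calc ENNReal.ofReal ((1 - η) ^ q₁) + ENNReal.ofReal c₀ *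
        P {ω | dSet d (X ω) C ≤ ENNReal.ofReal (a * f r)}
        ≤ (∫⁻ ω, V ω ^ q₁ ∂P) + ENNReal.ofReal c₀ * P {ω | V ω ≤ ENNReal.ofReal a} :=
          add_le_add hlow (mul_le_mul_right (measure_mono hsub) _)
      _ ≤ ENNReal.ofReal (1 - q₁/q₂) + ENNReal.ofReal (q₁/q₂) * ∫⁻ ω, V ω ^ q₂ ∂P := hstep
      _ ≤ _ := add_le_add_right (mul_le_mul_right hhigh _) _
  -- convert to reals
  set p : ℝ := (P {ω | dSet d (X ω) C ≤ ENNReal.ofReal (a * f r)}).toReal with hpdef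
  have hPAne : P {ω | dSet d (X ω) C ≤ ENNReal.ofReal (a * f r)} ≠ ⊤ := measure_ne_top P _
  have hp0 : 0 ≤ p := ENNReal.toReal_nonneg
  have hreal : (1 - η) ^ q₁ + c₀ * p ≤ (1 - q₁/q₂) + (q₁/q₂) * (1 + 2*η) ^ q₂ := by
    have hLne : ENNReal.ofReal ((1 - η) ^ q₁) + ENNReal.ofReal c₀ *
        P {ω | dSet d (X ω) C ≤ ENNReal.ofReal (a * f r)} ≠ ⊤ :=
      ENNReal.add_ne_top.2 ⟨ENNReal.ofReal_ne_top, ENNReal.mul_ne_top ENNReal.ofReal_ne_top hPAne⟩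
    have hRne : ENNReal.ofReal (1 - q₁/q₂) + ENNReal.ofReal (q₁/q₂) *
        ENNReal.ofReal ((1 + 2*η) ^ q₂) ≠ ⊤ :=
      ENNReal.add_ne_top.2 ⟨ENNReal.ofReal_ne_top,
        ENNReal.mul_ne_top ENNReal.ofReal_ne_top ENNReal.ofReal_ne_top⟩
    have := ENNReal.toReal_mono hRne hPAle
    rw [ENNReal.toReal_add (ENNReal.ofReal_ne_top)
        (ENNReal.mul_ne_top ENNReal.ofReal_ne_top hPAne),
      ENNReal.toReal_add (ENNReal.ofReal_ne_top)
        (ENNReal.mul_ne_top ENNReal.ofReal_ne_top ENNReal.ofReal_ne_top),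
      ENNReal.toReal_mul, ENNReal.toReal_mul,
      ENNReal.toReal_ofReal (Real.rpow_nonneg (by linarith) q₁),
      ENNReal.toReal_ofReal hc₀pos.le,
      ENNReal.toReal_ofReal (by linarith : (0:ℝ) ≤ 1 - q₁/q₂),
      ENNReal.toReal_ofReal ht0.le,
      ENNReal.toReal_ofReal (Real.rpow_nonneg (by linarith) q₂)] at this
    exact this
  have hpδ : p ≤ δ₀ := by
    have h1' : c₀ * p ≤ 1 - q₁ / q₂ + q₁ / q₂ * (1 + 2 * η) ^ q₂ - (1 - η) ^ q₁ := by
      linarith [hreal]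
    have h2' : c₀ * p < c₀ * δ₀ := h1'.trans_lt hηδ
    exact ((mul_lt_mul_iff_right₀ hc₀pos).1 h2').le
  rw [← ENNReal.ofReal_toReal hPAne]
  exact ENNReal.ofReal_le_ofReal hpδ


/-- **Lemma 5.3.** Let `0 < q₁ < q₂` and `f : [0,∞) → ℝ₊`. If
`D^{(q)}(r + log 2|q₁) ∼ f(r)` and `D^{(q)}(r|q₂) ∼ f(r)`, then for any `ε > 0`,
`lim_{r→∞} sup_{C ⊂ F, |C| ≤ e^r} ℙ(d(X,C) ≤ (1−ε) f(r)) = 0`. -/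
theorem quantization_concentration_of_moment_equivalence
    {Ω E F : Type*} [MeasurableSpace Ω] [MeasurableSpace E] [MeasurableSpace F]
    (P : Measure Ω) [IsProbabilityMeasure P]
    (d : E → F → ℝ) (hd : Measurable fun x : E × F => d x.1 x.2)
    (hd0 : ∀ x y, 0 ≤ d x y) (X : Ω → E) (hX : Measurable X)
    (f : ℝ → ℝ) (hfpos : ∀ r, 0 ≤ r → 0 < f r)
    (q₁ q₂ : ℝ) (hq₁ : 0 < q₁) (hq₁₂ : q₁ < q₂)
    (h1 : Tendsto (fun r : ℝ => Dquant P d X (r + Real.log 2) q₁ / ENNReal.ofReal (f r))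
      atTop (𝓝 1))
    (h2 : Tendsto (fun r : ℝ => Dquant P d X r q₂ / ENNReal.ofReal (f r)) atTop (𝓝 1)) :
    ∀ ε : ℝ, 0 < ε →
      Tendsto (fun r : ℝ =>
          ⨆ (C : Finset F) (_ : (C.card : ℝ) ≤ Real.exp r),
            P {ω | dSet d (X ω) C ≤ ENNReal.ofReal ((1 - ε) * f r)})
        atTop (𝓝 0) := by
  intro ε hε
  rcases lt_or_ge ε 1 with hε1 | hε1
  · exact main_aux P d hd X hX f hfpos q₁ q₂ hq₁ hq₁₂ h1 h2 hε hε1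
  · have hhalf := main_aux P d hd X hX f hfpos q₁ q₂ hq₁ hq₁₂ h1 h2
      (by norm_num : (0:ℝ) < 1/2) (by norm_num)
    refine tendsto_of_tendsto_of_tendsto_of_le_of_le' tendsto_const_nhds hhalf
      (Eventually.of_forall fun r => zero_le) ?_
    filter_upwards [eventually_ge_atTop (0:ℝ)] with r hr
    refine iSup_mono fun C => iSup_mono fun hC => measure_mono fun ω hω => ?_
    refine le_trans hω (ENNReal.ofReal_le_ofReal ?_)
    have hfr := hfpos r hr
    nlinarith
end
end

section
/- Let (Z_i)_{i∈ℕ} be an ergodic stationary sequence of real-valued random variables and let S_n = Σ_{i=1}^n Z_i, with S_1^n = (S_1,…,S_n) ∈ ℝ^n. Let ε > 0 and assume 𝔼[log(|Z_1|/(2ε) + 2)] < ∞. Then there exist a universal constant c < ∞ (not depending on (Z_i) or ε) and finite codebooks 𝒞_n ⊂ ℝ^n of size at most exp{2n·𝔼[log(|Z_1|/(2ε) + 2)] + nc} such that lim_{n→∞} ℙ( min_{ŝ ∈ 𝒞_n} ‖S_1^n − ŝ‖_{ℓ_∞^n} ≤ ε ) = 1, where ‖·‖_{ℓ_∞^n}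 is the maximum norm on ℝ^n. -/
open MeasureTheory Filter Set Topology
open scoped ENNReal NNReal
open Function
open scoped RealInnerProductSpace

set_option linter.unusedSectionVars false

variable {Ω : Type} [MeasurableSpace Ω] {P : Measure Ω} [IsProbabilityMeasure P]

noncomputable def koopman (T : Ω → Ω) (hT : MeasurePreserving T P P) :
    Lp ℝ 2 P →L[ℝ] Lp ℝ 2 P :=
  haveI : Fact ((1:ℝ≥0∞) ≤ 2) := ⟨one_le_two⟩
  LinearMap.mkContinuous
    { toFun := Lp.compMeasurePreserving T hT
      map_add' := map_add _
      map_smul' := fun c g => Lp.ext <| by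
        filter_upwards [Lp.coeFn_compMeasurePreserving (c • g) hT,
          Lp.coeFn_smul c (Lp.compMeasurePreserving T hT g),
          hT.quasiMeasurePreserving.ae_eq_comp (Lp.coeFn_smul c g),
          hT.quasiMeasurePreserving.ae_eq_comp (ae_eq_refl (⇑g)),
          Lp.coeFn_compMeasurePreserving g hT] with ω h1 h2 h3 h4 h5
        simp only [RingHom.id_apply]
        rw [h1, h2]
        simp only [Function.comp_apply, Pi.smul_apply] at h3 ⊢
        rw [h3, h5]
        rfl }
    1 fun g => by
      haveI : Fact ((1:ℝ≥0∞) ≤ 2) := ⟨one_le_two⟩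
      simp [Lp.norm_compMeasurePreserving]

theorem koopman_norm_le (T : Ω → Ω) (hT : MeasurePreserving T P P) :
    ‖koopman (P := P) T hT‖ ≤ 1 :=
  haveI : Fact ((1:ℝ≥0∞) ≤ 2) := ⟨one_le_two⟩
  LinearMap.mkContinuous_norm_le _ zero_le_one _

theorem koopman_coeFn (T : Ω → Ω) (hT : MeasurePreserving T P P) (g : Lp ℝ 2 P) :
    ⇑(koopman (P := P) T hT g) =ᵐ[P] ⇑g ∘ T :=
  haveI : Fact ((1:ℝ≥0∞) ≤ 2) := ⟨one_le_two⟩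
  Lp.coeFn_compMeasurePreserving g hT

variable {Ω : Type} [MeasurableSpace Ω] {P : Measure Ω} [IsProbabilityMeasure P]

theorem Lp_coeFn_sum {ι : Type*} (s : Finset ι) (F : ι → Lp ℝ 2 P) :
    ⇑(∑ i ∈ s, F i) =ᵐ[P] fun ω => ∑ i ∈ s, F i ω := by
  classical
  induction s using Finset.induction with
  | empty => simp only [Finset.sum_empty]; exact Lp.coeFn_zero ℝ 2 P
  | insert _ _ h ih =>
    rename_i a s
    rw [Finset.sum_insert h]
    filter_upwards [Lp.coeFn_add (F a) (∑ i ∈ s, F i), ih] with ω h1 h2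
    rw [Finset.sum_insert h]
    simp only [h1, Pi.add_apply, h2]

theorem koopman_iterate_coeFn (T : Ω → Ω) (hT : MeasurePreserving T P P) (g : Lp ℝ 2 P)
    {f : Ω → ℝ} (hg : ⇑g =ᵐ[P] f) (k : ℕ) :
    ⇑((koopman (P := P) T hT)^[k] g) =ᵐ[P] fun ω => f (T^[k] ω) := by
  induction k with
  | zero => simpa using hg
  | succ k ih =>
    rw [Function.iterate_succ_apply']
    filter_upwards [koopman_coeFn T hT ((koopman (P := P) T hT)^[k] g),
      hT.quasiMeasurePreserving.ae_eq_comp ih] with ω h1 h2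
    rw [h1]
    simpa [Function.comp, Function.iterate_succ_apply] using h2.trans (by
      simp [Function.iterate_succ_apply'] )

theorem birkhoffAverage_coeFn (T : Ω → Ω) (hT : MeasurePreserving T P P) (g : Lp ℝ 2 P)
    {f : Ω → ℝ} (hg : ⇑g =ᵐ[P] f) (n : ℕ) :
    ⇑(birkhoffAverage ℝ (koopman (P := P) T hT) id n g) =ᵐ[P]
      fun ω => (n : ℝ)⁻¹ * ∑ k ∈ Finset.range n, f (T^[k] ω) := by
  have hsum : ⇑(birkhoffSum (koopman (P := P) T hT) id n g) =ᵐ[P]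
      fun ω => ∑ k ∈ Finset.range n, f (T^[k] ω) := by
    unfold birkhoffSum
    filter_upwards [Lp_coeFn_sum (Finset.range n)
        (fun k => (koopman (P := P) T hT)^[k] g),
      ae_all_iff.2 fun k : ℕ => koopman_iterate_coeFn T hT g hg k] with ω h1 h2
    simp only [id] at h1 ⊢
    rw [h1]
    exact Finset.sum_congr rfl fun k _ => h2 k
  unfold birkhoffAverage
  filter_upwards [Lp.coeFn_smul ((n:ℝ)⁻¹) (birkhoffSum (koopman (P := P) T hT) id n g),
    hsum] with ω h1 h2
  rw [h1]
  simp [h2, smul_eq_mul]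
theorem met_prob {T : Ω → Ω} (hT : Ergodic T P) {f : Ω → ℝ} (hfm : Measurable f)
    (hf2 : MemLp f 2 P) {δ : ℝ} (hδ : 0 < δ) :
    Tendsto (fun n : ℕ =>
        P {ω | δ ≤ |(n:ℝ)⁻¹ * (∑ k ∈ Finset.range n, f (T^[k] ω)) - ∫ x, f x ∂P|})
      atTop (𝓝 (0 : ℝ≥0∞)) := by
  haveI : Fact ((1:ℝ≥0∞) ≤ 2) := ⟨one_le_two⟩
  set U := koopman (P := P) T hT.toMeasurePreserving with hU
  set F : Lp ℝ 2 P := hf2.toLp f with hF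
  have hgF : ⇑F =ᵐ[P] f := MemLp.coeFn_toLp hf2
  have hconv := U.tendsto_birkhoffAverage_orthogonalProjection
    (koopman_norm_le T hT.toMeasurePreserving) F
  set L : Lp ℝ 2 P :=
    ↑(Submodule.orthogonalProjectionOnto (LinearMap.eqLocus (U : Lp ℝ 2 P →ₗ[ℝ] Lp ℝ 2 P) ((1 : Lp ℝ 2 P →L[ℝ] Lp ℝ 2 P) : Lp ℝ 2 P →ₗ[ℝ] Lp ℝ 2 P)) F) with hL
  -- L is a fixed point of U
  have hUL : U L = L := by
    have hmem := (Submodule.orthogonalProjectionOnto (LinearMap.eqLocus (U : Lp ℝ 2 P →ₗ[ℝ] Lp ℝ 2 P) ((1 : Lp ℝ 2 P →L[ℝ] Lp ℝ 2 P) : Lp ℝ 2 P →ₗ[ℝ] Lp ℝ 2 P)) F).2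
    rw [LinearMap.mem_eqLocus] at hmem
    exact hmem
  -- hence a.e. constant
  obtain ⟨cst, hcst⟩ : ∃ c, ⇑L =ᵐ[P] Function.const Ω c := by
    refine hT.ae_eq_const_of_ae_eq_comp_ae (Lp.aestronglyMeasurable L) ?_
    have h1 : ⇑(U L) =ᵐ[P] ⇑L ∘ T := koopman_coeFn T hT.toMeasurePreserving L
    rw [hUL] at h1
    exact h1.symm
  -- integrals of iterates
  have hfi : Integrable f P := hf2.integrable one_le_two
  have hmp : ∀ k : ℕ, MeasurePreserving (T^[k]) P P := fun k =>
    hT.toMeasurePreserving.iterate k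
  have hint : ∀ k : ℕ, ∫ ω, f (T^[k] ω) ∂P = ∫ x, f x ∂P := by
    intro k
    conv_rhs => rw [← (hmp k).map_eq]
    rw [integral_map (hmp k).measurable.aemeasurable]
    rw [(hmp k).map_eq]
    exact hfm.aestronglyMeasurable
  -- identify the constant via inner products with the constant-one function
  set One : Lp ℝ 2 P := (memLp_const (1:ℝ)).toLp (fun _ => (1:ℝ)) with hOne
  have hOne_ae : ⇑One =ᵐ[P] fun _ => (1:ℝ) := MemLp.coeFn_toLp _
  have hinner : ∀ g : Lp ℝ 2 P, ⟪One, g⟫ = ∫ ω, g ω ∂P := by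
    intro g
    rw [MeasureTheory.L2.inner_def]
    refine integral_congr_ae ?_
    filter_upwards [hOne_ae] with ω h1
    simp [h1, RCLike.inner_apply]
  have havg := fun n => birkhoffAverage_coeFn T hT.toMeasurePreserving F hgF n
  have h2 : ∀ n : ℕ, 1 ≤ n → ⟪One, birkhoffAverage ℝ U id n F⟫ = ∫ x, f x ∂P := by
    intro n hn
    rw [hinner]
    rw [integral_congr_ae (havg n)]
    have hterm : ∀ k : ℕ, Integrable (fun ω => f (T^[k] ω)) P :=
      fun k => ((hmp k).integrable_comp hfm.aestronglyMeasurable).2 hfi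
    rw [integral_const_mul, integral_finset_sum _ (fun k _ => hterm k)]
    rw [Finset.sum_congr rfl fun k _ => hint k]
    simp only [Finset.sum_const, Finset.card_range, nsmul_eq_mul]
    rw [← mul_assoc, inv_mul_cancel₀ (by positivity : (n:ℝ) ≠ 0), one_mul]
  have h3 : ⟪One, L⟫ = cst := by
    rw [hinner, integral_congr_ae hcst]
    simp
  have hcst_eq : cst = ∫ x, f x ∂P := by
    have h1 : Tendsto (fun n => ⟪One, birkhoffAverage ℝ U id n F⟫) atTop (𝓝 ⟪One, L⟫) :=
      (continuous_const.inner continuous_id).continuousAt.tendsto.comp hconv |>.congr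
        (fun n => rfl)
    have h1' : Tendsto (fun _ : ℕ => ∫ x, f x ∂P) atTop (𝓝 ⟪One, L⟫) := by
      refine h1.congr' ?_
      filter_upwards [eventually_ge_atTop 1] with n hn
      exact h2 n hn
    have := tendsto_nhds_unique h1' tendsto_const_nhds
    rw [← this, h3]
  -- L² distance tends to zero
  have hdist : Tendsto (fun n => ‖birkhoffAverage ℝ U id n F - L‖) atTop (𝓝 (0:ℝ)) := by
    rw [← tendsto_iff_norm_sub_tendsto_zero]
    exact hconv
  set G : ℕ → Ω → ℝ := fun n ω =>
    (n:ℝ)⁻¹ * (∑ k ∈ Finset.range n, f (T^[k] ω)) - ∫ x, f x ∂P with hG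
  have hGnorm : ∀ n, eLpNorm (G n) 2 P
      = ENNReal.ofReal ‖birkhoffAverage ℝ U id n F - L‖ := by
    intro n
    have hae : G n =ᵐ[P] ⇑(birkhoffAverage ℝ U id n F - L) := by
      filter_upwards [havg n, hcst, Lp.coeFn_sub (birkhoffAverage ℝ U id n F) L] with ω e1 e2 e3
      rw [← hU] at e1
      simp only [hG, e3, Pi.sub_apply, e1, e2, Function.const, hcst_eq]
    rw [eLpNorm_congr_ae hae, Lp.norm_def,
      ENNReal.ofReal_toReal (Lp.eLpNorm_ne_top _)]
  -- eLpNorm tends to 0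
  have heLp : Tendsto (fun n => eLpNorm (G n) 2 P) atTop (𝓝 0) := by
    simp only [hGnorm]
    have := ENNReal.tendsto_ofReal hdist
    simpa using this
  -- Chebyshev
  have hcheb : ∀ n : ℕ, P {ω | δ ≤ |G n ω|} ≤
      (ENNReal.ofReal δ)⁻¹ ^ (2:ℝ) * eLpNorm (G n) 2 P ^ (2:ℝ) := by
    intro n
    have hGm : AEStronglyMeasurable (G n) P := by
      apply AEStronglyMeasurable.sub _ aestronglyMeasurable_const
      apply AEStronglyMeasurable.const_mul
      exact (Finset.aestronglyMeasurable_fun_sum _ fun k _ =>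
        (hfm.comp (hT.toMeasurePreserving.measurable.iterate k)).aestronglyMeasurable)
    have := meas_ge_le_mul_pow_eLpNorm_enorm P (p := 2) two_ne_zero ENNReal.ofNat_ne_top hGm
      (ε := ENNReal.ofReal δ) (by simpa using hδ.le.lt_of_ne' (by simpa using hδ.ne'))
      (fun h => absurd h ENNReal.ofReal_ne_top)
    have hset : {ω | δ ≤ |G n ω|} = {ω | ENNReal.ofReal δ ≤ (‖G n ω‖₊ : ℝ≥0∞)} := by
      ext ω
      simp only [mem_setOf_eq]
      rw [← enorm_eq_nnnorm, ← ofReal_norm, ENNReal.ofReal_le_ofReal_iff (norm_nonneg _),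
        Real.norm_eq_abs]
    rw [hset]
    have e : ((2:ℝ≥0∞).toReal) = (2:ℝ) := by norm_num
    rw [e] at this
    exact this
  -- squeeze
  have hupper : Tendsto (fun n => (ENNReal.ofReal δ)⁻¹ ^ (2:ℝ) * eLpNorm (G n) 2 P ^ (2:ℝ))
      atTop (𝓝 0) := by
    have h2 : Tendsto (fun n => eLpNorm (G n) 2 P ^ (2:ℝ)) atTop (𝓝 0) := by
      have : ∀ n, eLpNorm (G n) 2 P ^ (2:ℝ) = eLpNorm (G n) 2 P * eLpNorm (G n) 2 P := by
        intro n
        rw [show (2:ℝ) = ((2:ℕ):ℝ) by norm_num, ENNReal.rpow_natCast, sq]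
      simp only [this]
      simpa using ENNReal.Tendsto.mul heLp (Or.inr ENNReal.zero_ne_top) heLp
        (Or.inr ENNReal.zero_ne_top)
    have hc : (ENNReal.ofReal δ)⁻¹ ^ (2:ℝ) ≠ ∞ := by
      apply ENNReal.rpow_ne_top_of_nonneg (by norm_num)
      exact ENNReal.inv_ne_top.2 (ENNReal.ofReal_pos.2 hδ).ne'
    simpa using ENNReal.Tendsto.const_mul h2 (Or.inr hc)
  refine tendsto_of_tendsto_of_tendsto_of_le_of_le tendsto_const_nhds hupper
    (fun n => zero_le) (fun n => hcheb n)
theorem abs_sub_trunc_le (K : ℕ) (x : ℝ) : |x - max (-(K:ℝ)) (min x K)| ≤ |x| := by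
  rcases le_total 0 x with h | h
  · rw [max_eq_right ((neg_nonpos.2 (Nat.cast_nonneg K)).trans (le_min h (Nat.cast_nonneg K))),
      abs_of_nonneg (sub_nonneg.2 (min_le_left x K)), abs_of_nonneg h]
    have := le_min h (Nat.cast_nonneg K)
    linarith
  · rw [min_eq_left (h.trans (Nat.cast_nonneg K)),
      abs_of_nonpos (sub_nonpos.2 (le_max_right _ _)), abs_of_nonpos h]
    have : max (-(K:ℝ)) x ≤ 0 := max_le (neg_nonpos.2 (Nat.cast_nonneg K)) h
    linarith

theorem abs_trunc_le (K : ℕ) (x : ℝ) : |max (-(K:ℝ)) (min x K)| ≤ K := by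
  rw [abs_le]
  constructor
  · exact le_max_left _ _
  · exact max_le (neg_le_self (Nat.cast_nonneg K)) (min_le_right _ _)

theorem trunc_eq_self {K : ℕ} {x : ℝ} (h : |x| ≤ K) : max (-(K:ℝ)) (min x K) = x := by
  rw [abs_le] at h
  rw [min_eq_left h.2, max_eq_right h.1]

theorem met_prob_int {Ω : Type} [MeasurableSpace Ω] {P : Measure Ω} [IsProbabilityMeasure P]
    {T : Ω → Ω} (hT : Ergodic T P) {g : Ω → ℝ} (hgm : Measurable g)
    (hgi : Integrable g P) :
    Tendsto (fun n : ℕ =>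
        P {ω | (n:ℝ) * ((∫ x, g x ∂P) + 1) ≤ ∑ k ∈ Finset.range n, g (T^[k] ω)})
      atTop (𝓝 (0 : ℝ≥0∞)) := by
  rw [ENNReal.tendsto_nhds_zero]
  intro ε hε
  set r : ℝ≥0∞ := min 1 ε with hr
  have hr0 : r ≠ 0 := (lt_min one_pos hε).ne'
  have hrtop : r ≠ ∞ := by simp [hr]
  have hrε : r ≤ ε := min_le_right _ _
  set t : ℝ := r.toReal with ht
  have ht0 : 0 < t := ENNReal.toReal_pos hr0 hrtop
  -- truncations
  set gK : ℕ → Ω → ℝ := fun K ω => max (-(K:ℝ)) (min (g ω) K) with hgK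
  have hgKm : ∀ K, Measurable (gK K) := fun K =>
    measurable_const.max (hgm.min measurable_const)
  -- dominated convergence to choose the truncation level
  have hDCT : Tendsto (fun K => ∫ ω, |g ω - gK K ω| ∂P) atTop (𝓝 (∫ _ : Ω, (0:ℝ) ∂P)) := by
    refine tendsto_integral_of_dominated_convergence (fun ω => |g ω|)
      (fun K => ((hgm.sub (hgKm K)).abs).aestronglyMeasurable) hgi.abs ?_ ?_
    · intro K
      refine ae_of_all _ fun ω => ?_
      rw [Real.norm_eq_abs, abs_abs]
      exact abs_sub_trunc_le K (g ω)
    · refine ae_of_all _ fun ω => ?_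
      have hev : ∀ᶠ K : ℕ in atTop, |g ω - gK K ω| = 0 := by
        filter_upwards [eventually_ge_atTop ⌈|g ω|⌉₊] with K hK
        have : |g ω| ≤ (K:ℝ) := (Nat.le_ceil _).trans (by exact_mod_cast hK)
        simp [hgK, trunc_eq_self this]
      exact Tendsto.congr' (hev.mono fun K h => h.symm) tendsto_const_nhds
  rw [integral_zero] at hDCT
  obtain ⟨K, hK⟩ := (hDCT.eventually_lt_const
    (show (0:ℝ) < min (t/8) 4⁻¹ by positivity)).exists
  set hfun : Ω → ℝ := fun ω => g ω - gK K ω with hhfun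
  have hhm : Measurable hfun := hgm.sub (hgKm K)
  have hgKi : Integrable (gK K) P :=
    (MemLp.of_bound (hgKm K).aestronglyMeasurable (K:ℝ)
      (ae_of_all _ fun ω => by rw [Real.norm_eq_abs]; exact abs_trunc_le K (g ω))).integrable
      le_rfl
  have hhi : Integrable hfun P := hgi.sub hgKi
  have habs : ∫ ω, |hfun ω| ∂P ≤ min (t/8) 4⁻¹ := hK.le
  have habs0 : 0 ≤ ∫ ω, |hfun ω| ∂P := integral_nonneg fun ω => abs_nonneg _
  have hIh : |∫ ω, hfun ω ∂P| ≤ 4⁻¹ := by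
    calc |∫ ω, hfun ω ∂P| ≤ ∫ ω, |hfun ω| ∂P := by
          simpa [Real.norm_eq_abs] using norm_integral_le_integral_norm (μ := P) hfun
      _ ≤ 4⁻¹ := habs.trans (min_le_right _ _)
  have hIsplit : ∫ x, g x ∂P = (∫ x, gK K x ∂P) + ∫ ω, hfun ω ∂P := by
    rw [integral_sub hgi hgKi]; ring
  set A : ℕ → Set Ω := fun n =>
    {ω | (n:ℝ)/4 ≤ ∑ k ∈ Finset.range n, |hfun (T^[k] ω)|} with hA
  set B : ℕ → Set Ω := fun n =>
    {ω | (1:ℝ)/2 ≤ |(n:ℝ)⁻¹ * (∑ k ∈ Finset.range n, gK K (T^[k] ω)) - ∫ x, gK K x ∂P|} with hB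
  have hBmem : MemLp (gK K) 2 P :=
    MemLp.of_bound (hgKm K).aestronglyMeasurable (K:ℝ)
      (ae_of_all _ fun ω => by rw [Real.norm_eq_abs]; exact abs_trunc_le K (g ω))
  have hBt : Tendsto (fun n => P (B n)) atTop (𝓝 0) :=
    met_prob hT (hgKm K) hBmem (by norm_num : (0:ℝ) < 1/2)
  have hmp : ∀ k : ℕ, MeasurePreserving (T^[k]) P P := fun k =>
    hT.toMeasurePreserving.iterate k
  have hintc : ∀ k : ℕ, ∫ ω, |hfun (T^[k] ω)| ∂P = ∫ ω, |hfun ω| ∂P := by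
    intro k
    conv_rhs => rw [← (hmp k).map_eq]
    rw [integral_map (hmp k).measurable.aemeasurable]
    rw [(hmp k).map_eq]
    exact hhm.abs.aestronglyMeasurable
  have hMarkov : ∀ n : ℕ, 1 ≤ n → P (A n) ≤ ENNReal.ofReal (4 * ∫ ω, |hfun ω| ∂P) := by
    intro n hn
    have hterm : ∀ k : ℕ, Integrable (fun ω => |hfun (T^[k] ω)|) P := fun k =>
      ((hmp k).integrable_comp hhm.abs.aestronglyMeasurable).2 hhi.abs
    have hsumint : Integrable (fun ω => ∑ k ∈ Finset.range n, |hfun (T^[k] ω)|) P :=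
      integrable_finset_sum _ fun k _ => hterm k
    have hmark := mul_meas_ge_le_integral_of_nonneg
      (ae_of_all _ fun ω => Finset.sum_nonneg fun k _ => abs_nonneg _) hsumint ((n:ℝ)/4)
    have hintsum : ∫ ω, ∑ k ∈ Finset.range n, |hfun (T^[k] ω)| ∂P
        = n * ∫ ω, |hfun ω| ∂P := by
      rw [integral_finset_sum _ fun k _ => hterm k,
        Finset.sum_congr rfl fun k _ => hintc k]
      simp
    rw [hintsum] at hmark
    have hn' : (0:ℝ) < n := by exact_mod_cast hn
    have htR : (P (A n)).toReal ≤ 4 * ∫ ω, |hfun ω| ∂P := by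
      rw [hA]
      simp only [← measureReal_def]
      nlinarith [hmark]
    calc P (A n) = ENNReal.ofReal ((P (A n)).toReal) :=
          (ENNReal.ofReal_toReal (measure_ne_top _ _)).symm
      _ ≤ _ := ENNReal.ofReal_le_ofReal htR
  have hincl : ∀ n : ℕ, 1 ≤ n →
      {ω | (n:ℝ) * ((∫ x, g x ∂P) + 1) ≤ ∑ k ∈ Finset.range n, g (T^[k] ω)} ⊆ A n ∪ B n := by
    intro n hn ω hω
    simp only [mem_setOf_eq] at hω
    by_cases hA' : ω ∈ A n
    · exact Or.inl hA'
    right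
    rw [hA] at hA'
    simp only [mem_setOf_eq, not_le] at hA'
    rw [hB]
    simp only [mem_setOf_eq]
    have hn' : (0:ℝ) < n := by exact_mod_cast hn
    have hsplit : ∑ k ∈ Finset.range n, gK K (T^[k] ω)
        = (∑ k ∈ Finset.range n, g (T^[k] ω)) - ∑ k ∈ Finset.range n, hfun (T^[k] ω) := by
      rw [← Finset.sum_sub_distrib]
      exact Finset.sum_congr rfl fun k _ => by simp [hhfun]
    have hSh : ∑ k ∈ Finset.range n, hfun (T^[k] ω)
        ≤ ∑ k ∈ Finset.range n, |hfun (T^[k] ω)| :=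
      Finset.sum_le_sum fun k _ => le_abs_self _
    have hSK : (n:ℝ) * ((∫ x, gK K x ∂P) + 1/2) ≤ ∑ k ∈ Finset.range n, gK K (T^[k] ω) := by
      rw [hsplit, hIsplit] at *
      have := abs_le.1 hIh
      nlinarith
    have : 1/2 ≤ (n:ℝ)⁻¹ * (∑ k ∈ Finset.range n, gK K (T^[k] ω)) - ∫ x, gK K x ∂P := by
      have h1 : (n:ℝ)⁻¹ * ((n:ℝ) * ((∫ x, gK K x ∂P) + 1/2))
          ≤ (n:ℝ)⁻¹ * ∑ k ∈ Finset.range n, gK K (T^[k] ω) :=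
        mul_le_mul_of_nonneg_left hSK (by positivity)
      rw [← mul_assoc, inv_mul_cancel₀ hn'.ne', one_mul] at h1
      linarith
    exact this.trans (le_abs_self _)
  -- assemble
  have hBev : ∀ᶠ n in atTop, P (B n) ≤ r/2 := by
    have : (0:ℝ≥0∞) < r/2 := ENNReal.div_pos hr0 (by norm_num)
    exact hBt.eventually_le_const this
  filter_upwards [hBev, eventually_ge_atTop 1] with n hB1 hn
  have hAB : P {ω | (n:ℝ) * ((∫ x, g x ∂P) + 1) ≤ ∑ k ∈ Finset.range n, g (T^[k] ω)}
      ≤ P (A n) + P (B n) :=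
    (measure_mono (hincl n hn)).trans (measure_union_le _ _)
  have hAr : ENNReal.ofReal (4 * ∫ ω, |hfun ω| ∂P) ≤ r/2 := by
    have h1 : 4 * ∫ ω, |hfun ω| ∂P ≤ t/2 := by
      have := habs.trans (min_le_left _ _)
      linarith
    calc ENNReal.ofReal (4 * ∫ ω, |hfun ω| ∂P) ≤ ENNReal.ofReal (t/2) :=
          ENNReal.ofReal_le_ofReal h1
      _ = ENNReal.ofReal t / ENNReal.ofReal 2 := ENNReal.ofReal_div_of_pos (by norm_num)
      _ = r / 2 := by rw [ht, ENNReal.ofReal_toReal hrtop]; norm_num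
  calc P {ω | (n:ℝ) * ((∫ x, g x ∂P) + 1) ≤ ∑ k ∈ Finset.range n, g (T^[k] ω)}
      ≤ P (A n) + P (B n) := hAB
    _ ≤ r/2 + r/2 := add_le_add ((hMarkov n hn).trans hAr) hB1
    _ = r := ENNReal.add_halves r
    _ ≤ ε := hrε

theorem sum_inv_sq_aux : ∀ N : ℕ, 1 ≤ N →
    ∑ k ∈ Finset.range N, (((k:ℝ)+1)^2)⁻¹ ≤ 2 - ((N:ℝ))⁻¹ := by
  intro N
  induction N with
  | zero => omega
  | succ N ih =>
    intro _
    rcases Nat.eq_zero_or_pos N with h | h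
    · subst h
      norm_num
    have ihN := ih h
    rw [Finset.sum_range_succ]
    have h1 : (0:ℝ) < (N:ℝ) := by exact_mod_cast h
    have h2 : (0:ℝ) < (N:ℝ)+1 := by positivity
    have key : (((N:ℝ)+1)^2)⁻¹ ≤ ((N:ℝ))⁻¹ - ((N:ℝ)+1)⁻¹ := by
      have h3 : ((N:ℝ))⁻¹ - ((N:ℝ)+1)⁻¹ = ((N:ℝ)*((N:ℝ)+1))⁻¹ := by
        rw [inv_sub_inv (ne_of_gt h1) (ne_of_gt h2)]; ring
      rw [h3]
      apply inv_anti₀ (by positivity)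
      nlinarith
    push_cast
    nlinarith [ihN, key]

theorem sum_inv_sq_le (N : ℕ) : ∑ k ∈ Finset.range N, (((k:ℝ)+1)^2)⁻¹ ≤ 2 := by
  rcases Nat.eq_zero_or_pos N with h | h
  · subst h; simp
  refine (sum_inv_sq_aux N h).trans ?_
  have h1 : (0:ℝ) < (N:ℝ) := by exact_mod_cast h
  have : 0 ≤ ((N:ℝ))⁻¹ := by positivity
  linarith

theorem sum_image_le (M : ℕ) (φ : ℕ → ℤ) (hφ : ∀ k, |φ k| = k) (hinj : Function.Injective φ) :
    ∑ j ∈ (Finset.range (M+1)).image φ, (((|j| : ℝ)+1)^2)⁻¹ ≤ 2 := by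
  rw [Finset.sum_image (fun a _ b _ h => hinj h)]
  have heq : ∀ k : ℕ, (((|(φ k : ℤ)| : ℝ)+1)^2)⁻¹ = (((k:ℝ)+1)^2)⁻¹ := by
    intro k
    have h5 : |((φ k : ℤ) : ℝ)| = (k : ℝ) := by
      rw [← Int.cast_abs, hφ k]
      simp
    rw [h5]
  calc ∑ k ∈ Finset.range (M+1), (((|(φ k : ℤ)| : ℝ)+1)^2)⁻¹
      = ∑ k ∈ Finset.range (M+1), (((k:ℝ)+1)^2)⁻¹ := Finset.sum_congr rfl fun k _ => heq k
    _ ≤ 2 := sum_inv_sq_le (M+1)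
theorem sum_icc_le (M : ℕ) :
    ∑ j ∈ Finset.Icc (-(M:ℤ)) (M:ℤ), (((|j| : ℝ)+1)^2)⁻¹ ≤ 4 := by
  classical
  have hf0 : ∀ j : ℤ, 0 ≤ (((|j| : ℝ)+1)^2)⁻¹ := fun j => by positivity
  have hsub : Finset.Icc (-(M:ℤ)) (M:ℤ) ⊆
      (Finset.range (M+1)).image (fun k : ℕ => (k:ℤ)) ∪
      (Finset.range (M+1)).image (fun k : ℕ => -(k:ℤ)) := by
    intro j hj
    rw [Finset.mem_Icc] at hj
    rw [Finset.mem_union]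
    rcases le_or_gt 0 j with h | h
    · refine Or.inl (Finset.mem_image.2 ⟨j.toNat, Finset.mem_range.2 ?_, ?_⟩) <;> omega
    · refine Or.inr (Finset.mem_image.2 ⟨(-j).toNat, Finset.mem_range.2 ?_, ?_⟩) <;> omega
  have hAle : ∑ j ∈ (Finset.range (M+1)).image (fun k : ℕ => (k:ℤ)),
      (((|j| : ℝ)+1)^2)⁻¹ ≤ 2 :=
    sum_image_le M _ (fun k => by simp) (fun a b h => by exact_mod_cast h)
  have hBle : ∑ j ∈ (Finset.range (M+1)).image (fun k : ℕ => -(k:ℤ)),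
      (((|j| : ℝ)+1)^2)⁻¹ ≤ 2 :=
    sum_image_le M _ (fun k => by simp) (fun a b h => by omega)
  have hunion : ∑ j ∈ (Finset.range (M+1)).image (fun k : ℕ => (k:ℤ)) ∪
      (Finset.range (M+1)).image (fun k : ℕ => -(k:ℤ)), (((|j| : ℝ)+1)^2)⁻¹ ≤ 2 + 2 := by
    rw [← Finset.union_sdiff_self_eq_union, Finset.sum_union Finset.disjoint_sdiff]
    refine add_le_add hAle (le_trans ?_ hBle)
    exact Finset.sum_le_sum_of_subset_of_nonneg (Finset.sdiff_subset) fun j _ _ => hf0 j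
  have hIcc := Finset.sum_le_sum_of_subset_of_nonneg hsub
    (f := fun j : ℤ => (((|j| : ℝ)+1)^2)⁻¹) (fun j _ _ => hf0 j)
  calc ∑ j ∈ Finset.Icc (-(M:ℤ)) (M:ℤ), (((|j| : ℝ)+1)^2)⁻¹
      ≤ _ := hIcc
    _ ≤ 2 + 2 := hunion
    _ = 4 := by norm_num
theorem count_card {n : ℕ} {Bv : ℝ} {M : ℕ}
    (D : Finset (Fin n → ℤ))
    (hprod : ∀ d ∈ D, ∏ i, ((|d i| : ℝ) + 1) ≤ Bv)
    (hicc : D ⊆ Fintype.piFinset fun _ : Fin n => Finset.Icc (-(M:ℤ)) (M:ℤ)) :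
    (D.card : ℝ) ≤ Bv^2 * 4^n := by
  classical
  rcases D.eq_empty_or_nonempty with rfl | ⟨d0, hd0⟩
  · simp
    positivity
  have hBnn : 0 ≤ Bv :=
    le_trans (Finset.prod_nonneg fun i _ => by positivity) (hprod d0 hd0)
  have h1 : ∀ d ∈ D, (1:ℝ) ≤ Bv^2 * ∏ i, (((|d i| : ℝ) + 1)^2)⁻¹ := by
    intro d hd
    have hp : (0:ℝ) < ∏ i, ((|d i| : ℝ) + 1) := Finset.prod_pos fun i _ => by positivity
    have heq : ∏ i, (((|d i| : ℝ) + 1)^2)⁻¹ = ((∏ i, ((|d i| : ℝ) + 1))^2)⁻¹ := by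
      rw [← Finset.prod_pow, ← Finset.prod_inv_distrib]
    rw [heq, le_mul_inv_iff₀ (by positivity), one_mul]
    have := hprod d hd
    nlinarith
  calc (D.card : ℝ) = ∑ _d ∈ D, (1:ℝ) := by simp
    _ ≤ ∑ d ∈ D, Bv^2 * ∏ i, (((|d i| : ℝ) + 1)^2)⁻¹ := Finset.sum_le_sum h1
    _ = Bv^2 * ∑ d ∈ D, ∏ i, (((|d i| : ℝ) + 1)^2)⁻¹ := by rw [Finset.mul_sum]
    _ ≤ Bv^2 * ∑ d ∈ Fintype.piFinset (fun _ : Fin n => Finset.Icc (-(M:ℤ)) (M:ℤ)),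
          ∏ i, (((|d i| : ℝ) + 1)^2)⁻¹ := by
        refine mul_le_mul_of_nonneg_left ?_ (by positivity)
        exact Finset.sum_le_sum_of_subset_of_nonneg hicc fun d _ _ =>
          Finset.prod_nonneg fun i _ => by positivity
    _ = Bv^2 * ∏ _i : Fin n, ∑ j ∈ Finset.Icc (-(M:ℤ)) (M:ℤ), (((|j| : ℝ)+1)^2)⁻¹ := by
        rw [Finset.prod_univ_sum]
    _ ≤ Bv^2 * 4^n := by
        refine mul_le_mul_of_nonneg_left ?_ (by positivity)
        calc ∏ _i : Fin n, ∑ j ∈ Finset.Icc (-(M:ℤ)) (M:ℤ), (((|j| : ℝ)+1)^2)⁻¹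
            ≤ ∏ _i : Fin n, (4:ℝ) :=
              Finset.prod_le_prod (fun i _ => Finset.sum_nonneg fun j _ => by positivity)
                (fun i _ => sum_icc_le M)
          _ = 4^n := by simp
theorem tele_sum (m : ℕ → ℤ) (j : ℕ) :
    ∑ k ∈ Finset.range (j+1), (m k - if k = 0 then 0 else m (k-1)) = m j := by
  induction j with
  | zero => simp
  | succ j ih =>
    rw [Finset.sum_range_succ, ih, if_neg (Nat.succ_ne_zero j), Nat.add_sub_cancel]
    ring


/-- **Lemma 6.2.** Let `(Z_i)` be an ergodic stationary sequence of real random variables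
(realized as `Z i = Z 0 ∘ T^i` for an ergodic measure-preserving `T`), `S_n = Σ_{i=1}^n Z_i`
and `ε > 0` with `𝔼[log(|Z_1|/(2ε) + 2)] < ∞`. Then there exist a universal constant
`c < ∞` and codebooks `𝒞_n ⊂ ℝ^n` of size at most `exp{2n 𝔼[log(|Z_1|/(2ε)+2)] + nc}`
such that `ℙ(min_{ŝ ∈ 𝒞_n} ‖S_1^n − ŝ‖_{ℓ^n_∞} ≤ ε) → 1`. -/
theorem ergodic_partial_sum_codebooks :
    ∃ c : ℝ,
      ∀ (Ω : Type) [MeasurableSpace Ω] (P : Measure Ω) [IsProbabilityMeasure P]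
        (T : Ω → Ω) (_ : Ergodic T P) (Z : ℕ → Ω → ℝ) (_ : Measurable (Z 0))
        (_ : ∀ i ω, Z (i + 1) ω = Z i (T ω)) (ε : ℝ) (_ : 0 < ε)
        (_ : Integrable (fun ω => Real.log (|Z 0 ω| / (2 * ε) + 2)) P),
        ∃ 𝒞 : (n : ℕ) → Finset (Fin n → ℝ),
          (∀ n : ℕ, ((𝒞 n).card : ℝ) ≤
            Real.exp (2 * n * (∫ ω, Real.log (|Z 0 ω| / (2 * ε) + 2) ∂P) + n * c)) ∧
          Tendsto (fun n : ℕ =>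
              P {ω | ∃ s ∈ 𝒞 n,
                  ‖(fun i : Fin n => ∑ k ∈ Finset.range (i.1 + 1), Z k ω) - s‖ ≤ ε})
            atTop (𝓝 (1 : ℝ≥0∞)) := by
  classical
  refine ⟨2 + Real.log 4, ?_⟩
  intro Ω _ P _ T hT Z hZ0 hZrec ε hε hInt
  set τ : ℝ := 2 * ε with hτ
  have hτ0 : 0 < τ := by positivity
  set g : Ω → ℝ := fun ω => Real.log (|Z 0 ω| / τ + 2) with hgdef
  have hgm : Measurable g :=
    Real.measurable_log.comp ((hZ0.abs.div_const τ).add_const 2)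
  set I : ℝ := ∫ ω, g ω ∂P with hI
  have hg_nonneg : ∀ ω, 0 ≤ g ω := fun ω => by
    refine Real.log_nonneg ?_
    have h0 : 0 ≤ |Z 0 ω| / τ := by positivity
    linarith
  have hI0 : 0 ≤ I := integral_nonneg fun ω => hg_nonneg ω
  set B : ℕ → ℝ := fun n => Real.exp (n * (I + 1)) with hBdef
  set M : ℕ → ℕ := fun n => ⌈B n⌉₊ with hM
  set D : (n : ℕ) → Finset (Fin n → ℤ) := fun n =>
    (Fintype.piFinset fun _ : Fin n => Finset.Icc (-(M n : ℤ)) (M n : ℤ)).filter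
      (fun d => ∏ i, ((|d i| : ℝ) + 1) ≤ B n) with hD
  set φ : (n : ℕ) → (Fin n → ℤ) → (Fin n → ℝ) := fun n d i =>
    τ * ((∑ k ∈ Finset.range (i.1+1), if h : k < n then d ⟨k, h⟩ else 0 : ℤ) : ℝ) with hφ
  refine ⟨fun n => (D n).image (φ n), ?_, ?_⟩
  · -- cardinality bound
    intro n
    have hcard : ((D n).card : ℝ) ≤ (B n)^2 * 4^n :=
      count_card (D n) (fun d hd => (Finset.mem_filter.1 hd).2) (Finset.filter_subset _ _)
    have h4 : (4:ℝ)^n = Real.exp (n * Real.log 4) := by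
      rw [Real.exp_nat_mul, Real.exp_log (by norm_num)]
    have hB2 : (B n)^2 = Real.exp (2 * ((n:ℝ) * (I + 1))) := by
      rw [hBdef]
      rw [show (2:ℝ) * ((n:ℝ) * (I+1)) = ((2:ℕ):ℝ) * ((n:ℝ) * (I+1)) by norm_num,
        Real.exp_nat_mul]
    calc (((D n).image (φ n)).card : ℝ) ≤ ((D n).card : ℝ) := by
          exact_mod_cast Finset.card_image_le
      _ ≤ (B n)^2 * 4^n := hcard
      _ = Real.exp (2 * n * I + n * (2 + Real.log 4)) := by
          rw [hB2, h4, ← Real.exp_add]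
          congr 1
          ring
  · -- probability tends to 1
    have hZit : ∀ j ω, Z j ω = Z 0 (T^[j] ω) := by
      intro j
      induction j with
      | zero => intro ω; rfl
      | succ j ih =>
        intro ω
        rw [hZrec j ω, ih (T ω), Function.iterate_succ_apply]
    have hmet := met_prob_int hT hgm hInt
    set bad : ℕ → Set Ω := fun n =>
      {ω | (n:ℝ) * (I + 1) ≤ ∑ k ∈ Finset.range n, g (T^[k] ω)} with hbad
    have hcov : ∀ n : ℕ, ∀ ω : Ω, (∑ k ∈ Finset.range n, g (T^[k] ω)) ≤ (n:ℝ) * (I + 1) →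
        ∃ s ∈ (D n).image (φ n),
          ‖(fun i : Fin n => ∑ k ∈ Finset.range (i.1 + 1), Z k ω) - s‖ ≤ ε := by
      intro n ω hsum
      set S : ℕ → ℝ := fun j => ∑ k ∈ Finset.range (j+1), Z k ω with hS
      set m : ℕ → ℤ := fun j => round (S j / τ) with hm
      set d : Fin n → ℤ := fun i => m i.1 - (if i.1 = 0 then 0 else m (i.1 - 1)) with hd
      have hround : ∀ j, |S j - τ * m j| ≤ ε := by
        intro j
        have h1 := abs_sub_round (S j / τ)
        have h2 : S j - τ * m j = τ * (S j / τ - m j) := by field_simp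
        rw [h2, abs_mul, abs_of_pos hτ0]
        calc τ * |S j / τ - (m j : ℝ)| ≤ τ * (1/2) :=
              mul_le_mul_of_nonneg_left h1 hτ0.le
          _ = ε := by rw [hτ]; ring
      have hkey : ∀ j : ℕ,
          ((|m j - (if j = 0 then 0 else m (j-1))| : ℤ) : ℝ) + 1 ≤ |Z j ω| / τ + 2 := by
        intro j
        have hr1 := abs_sub_round (S j / τ)
        rcases Nat.eq_zero_or_pos j with rfl | hj
        · have hgoal : (|m 0 - if (0:ℕ) = 0 then 0 else m (0-1)| : ℤ) = |m 0| := by simp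
          rw [hgoal]
          have hS0 : S 0 = Z 0 ω := by rw [hS]; simp
          have h3 := abs_sub_abs_le_abs_sub ((m 0 : ℝ)) (S 0 / τ)
          have heq : |(m 0:ℝ) - S 0 / τ| = |S 0 / τ - ((round (S 0 / τ) : ℤ) : ℝ)| := by
            rw [hm]
            exact abs_sub_comm _ _
          have hdiv : |S 0 / τ| = |Z 0 ω| / τ := by
            rw [abs_div, abs_of_pos hτ0, hS0]
          push_cast [Int.cast_abs]
          rw [hdiv] at h3
          linarith [hr1, h3, heq.le, heq.ge]
        · obtain ⟨j', rfl⟩ : ∃ j', j = j'+1 := ⟨j-1, by omega⟩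
          rw [if_neg (Nat.succ_ne_zero j'), Nat.add_sub_cancel]
          have hr2 := abs_sub_round (S j' / τ)
          have hZj : S (j'+1) - S j' = Z (j'+1) ω := by
            rw [hS]
            simp only [Finset.sum_range_succ]
            ring
          have hdecomp : ((m (j'+1) : ℝ)) - (m j' : ℝ) =
              (((m (j'+1):ℝ)) - S (j'+1)/τ) + ((S (j'+1) - S j')/τ) + (S j'/τ - (m j':ℝ)) := by
            field_simp
            ring
          have htri : |((m (j'+1) : ℝ)) - (m j' : ℝ)| ≤ 1/2 + |Z (j'+1) ω| / τ + 1/2 := by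
            rw [hdecomp]
            refine (abs_add_three _ _ _).trans ?_
            have e1 : |(m (j'+1):ℝ) - S (j'+1)/τ| = |S (j'+1)/τ - (m (j'+1):ℝ)| :=
              abs_sub_comm _ _
            have e2 : |(S (j'+1) - S j')/τ| = |Z (j'+1) ω| / τ := by
              rw [abs_div, abs_of_pos hτ0, hZj]
            rw [e1, e2, hm]
            exact add_le_add (add_le_add (abs_sub_round _) le_rfl) (abs_sub_round _)
          push_cast [Int.cast_abs]
          push_cast at htri
          linarith
      have hkey' : ∀ i : Fin n, |((d i : ℤ) : ℝ)| + 1 ≤ |Z i.1 ω| / τ + 2 := by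
        intro i
        rw [← Int.cast_abs]
        simp only [hd]
        exact_mod_cast hkey i.1
      have hexp : ∀ j : ℕ, |Z j ω| / τ + 2 = Real.exp (g (T^[j] ω)) := by
        intro j
        rw [hgdef]
        simp only []
        rw [← hZit j ω, Real.exp_log (by positivity)]
      have hprodle : ∏ i : Fin n, ((|d i| : ℝ) + 1) ≤ B n := by
        calc ∏ i : Fin n, ((|d i| : ℝ) + 1)
            ≤ ∏ i : Fin n, (|Z i.1 ω| / τ + 2) :=
              Finset.prod_le_prod (fun i _ => by positivity) (fun i _ => hkey' i)
          _ = ∏ i : Fin n, Real.exp (g (T^[i.1] ω)) :=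
              Finset.prod_congr rfl fun i _ => hexp i.1
          _ = Real.exp (∑ i : Fin n, g (T^[i.1] ω)) := (Real.exp_sum _ _).symm
          _ = Real.exp (∑ k ∈ Finset.range n, g (T^[k] ω)) := by
              rw [Fin.sum_univ_eq_sum_range (fun k => g (T^[k] ω))]
          _ ≤ B n := by rw [hBdef]; exact Real.exp_le_exp.2 hsum
      have hcoord : ∀ i : Fin n, d i ∈ Finset.Icc (-(M n : ℤ)) (M n : ℤ) := by
        intro i
        have h1 : |((d i : ℤ) : ℝ)| + 1 ≤ Real.exp (g (T^[i.1] ω)) := by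
          rw [← hexp]
          exact hkey' i
        have h2 : g (T^[i.1] ω) ≤ ∑ k ∈ Finset.range n, g (T^[k] ω) :=
          Finset.single_le_sum (f := fun k => g (T^[k] ω)) (fun k _ => hg_nonneg _)
            (Finset.mem_range.2 i.2)
        have h3 : |((d i : ℤ) : ℝ)| ≤ B n := by
          have h5 : Real.exp (g (T^[i.1] ω)) ≤ B n := by
            rw [hBdef]
            exact Real.exp_le_exp.2 (h2.trans hsum)
          linarith
        have h4 : |((d i : ℤ) : ℝ)| ≤ ((M n : ℕ) : ℝ) := h3.trans (Nat.le_ceil _)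
        have h5 : |d i| ≤ ((M n : ℕ) : ℤ) := by
          rw [← Int.cast_abs] at h4
          exact_mod_cast h4
        rw [Finset.mem_Icc]
        constructor
        · linarith [(abs_le.1 h5).1]
        · exact (abs_le.1 h5).2
      have hdD : d ∈ D n := by
        rw [hD]
        exact Finset.mem_filter.2 ⟨Fintype.mem_piFinset.2 hcoord, hprodle⟩
      refine ⟨φ n d, Finset.mem_image_of_mem _ hdD, ?_⟩
      rw [pi_norm_le_iff_of_nonneg hε.le]
      intro i
      have htel : (∑ k ∈ Finset.range (i.1+1), if h : k < n then d ⟨k, h⟩ else 0) = m i.1 := by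
        have hcg : ∀ k ∈ Finset.range (i.1+1), (if h : k < n then d ⟨k, h⟩ else 0)
            = m k - (if k = 0 then 0 else m (k-1)) := by
          intro k hk
          have hkn : k < n := lt_of_lt_of_le (Finset.mem_range.1 hk) i.2
          rw [dif_pos hkn]
        rw [Finset.sum_congr rfl hcg, tele_sum m i.1]
      simp only [Pi.sub_apply]
      rw [hφ]
      simp only []
      rw [htel, Real.norm_eq_abs]
      exact hround i.1
    -- squeeze
    have hlow : Tendsto (fun n => 1 - P (bad n)) atTop (𝓝 1) := by
      have h := ENNReal.Tendsto.sub (tendsto_const_nhds (x := (1:ℝ≥0∞))) hmet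
        (Or.inl ENNReal.one_ne_top)
      simpa using h
    refine tendsto_of_tendsto_of_tendsto_of_le_of_le hlow tendsto_const_nhds ?_ ?_
    · intro n
      rw [tsub_le_iff_right]
      calc (1:ℝ≥0∞) = P univ := measure_univ.symm
        _ ≤ P ({ω | ∃ s ∈ (D n).image (φ n),
              ‖(fun i : Fin n => ∑ k ∈ Finset.range (i.1 + 1), Z k ω) - s‖ ≤ ε} ∪ bad n) := by
            refine measure_mono fun ω _ => ?_
            rcases le_or_gt (∑ k ∈ Finset.range n, g (T^[k] ω)) ((n:ℝ) * (I + 1)) with h | h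
            · exact Or.inl (hcov n ω h)
            · exact Or.inr h.le
        _ ≤ _ := measure_union_le _ _
    · intro n
      exact prob_le_one
end

section
/- For r ≥ 0 let A_r be [0,∞)-valued random variables, let 0 < q₁ < q₂ and let f : [0,∞) → (0,∞). If 𝔼[A_r^{q₁}]^{1/q₁} ∼ f(r) and 𝔼[A_r^{q₂}]^{1/q₂} ∼ f(r) as r → ∞ (with these moments finite and positive), then A_r ∼ f(r) in probability, i.e. for every ε > 0, ℙ(|A_r/f(r) − 1| ≥ ε) → 0 as r → ∞. -/
open MeasureTheory Filter Set Topology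
open scoped ENNReal NNReal

noncomputable def gfun (p y : ℝ) : ℝ := y ^ p - 1 - p * (y - 1)

lemma gfun_hasDerivAt (p : ℝ) (hp : 1 ≤ p) (y : ℝ) :
    HasDerivAt (gfun p) (p * y ^ (p - 1) - p) y := by
  have h1 : HasDerivAt (fun y : ℝ => y ^ p) (p * y ^ (p - 1)) y :=
    Real.hasDerivAt_rpow_const (Or.inr hp)
  have h2 : HasDerivAt (fun y : ℝ => p * (y - 1)) p y := by
    simpa using (((hasDerivAt_id y).sub_const 1).const_mul p)
  exact (h1.sub_const 1).sub h2

lemma gfun_strictAntiOn (p : ℝ) (hp : 1 < p) : StrictAntiOn (gfun p) (Icc 0 1) := by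
  apply strictAntiOn_of_deriv_neg (convex_Icc 0 1)
  · exact fun y _ => (gfun_hasDerivAt p hp.le y).continuousAt.continuousWithinAt
  · intro x hx
    rw [interior_Icc] at hx
    rw [(gfun_hasDerivAt p hp.le x).deriv]
    have : x ^ (p - 1) < 1 := Real.rpow_lt_one hx.1.le hx.2 (by linarith)
    nlinarith

lemma gfun_strictMonoOn (p : ℝ) (hp : 1 < p) : StrictMonoOn (gfun p) (Ici 1) := by
  apply strictMonoOn_of_deriv_pos (convex_Ici 1)
  · exact fun y _ => (gfun_hasDerivAt p hp.le y).continuousAt.continuousWithinAt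
  · intro x hx
    rw [interior_Ici] at hx
    have hx1 : 1 < x := hx
    rw [(gfun_hasDerivAt p hp.le x).deriv]
    have : (1 : ℝ) < x ^ (p - 1) :=
      (Real.one_lt_rpow_iff_of_pos (by linarith)).2 (Or.inl ⟨hx1, by linarith⟩)
    nlinarith

lemma gfun_one (p : ℝ) : gfun p 1 = 0 := by simp [gfun]

lemma gfun_nonneg (p : ℝ) (hp : 1 < p) {y : ℝ} (hy : 0 ≤ y) : 0 ≤ gfun p y := by
  rcases le_total y 1 with h | h
  · have := (gfun_strictAntiOn p hp).antitoneOn ⟨hy, h⟩ (right_mem_Icc.2 zero_le_one) h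
    simpa [gfun_one] using this
  · have := (gfun_strictMonoOn p hp).monotoneOn (self_mem_Ici) h h
    simpa [gfun_one] using this

lemma gfun_lower (p : ℝ) (hp : 1 < p) (ε : ℝ) (hε : 0 < ε) (hε1 : ε ≤ 1) :
    ∃ δ : ℝ, 0 < δ ∧ ∀ y : ℝ, 0 ≤ y → ε ≤ |y - 1| → δ ≤ gfun p y := by
  have hmem1 : (1 : ℝ) ∈ Icc (0 : ℝ) 1 := right_mem_Icc.2 zero_le_one
  have hmemε : (1 - ε) ∈ Icc (0 : ℝ) 1 := ⟨by linarith, by linarith⟩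
  have hmem1' : (1 : ℝ) ∈ Ici (1 : ℝ) := self_mem_Ici
  have hmemε' : (1 + ε) ∈ Ici (1 : ℝ) := mem_Ici.2 (by linarith)
  refine ⟨min (gfun p (1 - ε)) (gfun p (1 + ε)), ?_, ?_⟩
  · apply lt_min
    · have := (gfun_strictAntiOn p hp) hmemε hmem1 (by linarith)
      simpa [gfun_one] using this
    · have := (gfun_strictMonoOn p hp) hmem1' hmemε' (by linarith)
      simpa [gfun_one] using this
  · intro y hy hay
    rcases le_abs.mp hay with h | h
    · have hy1 : 1 + ε ≤ y := by linarith
      have := (gfun_strictMonoOn p hp).monotoneOn hmemε' (mem_Ici.2 (by linarith)) hy1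
      exact le_trans (min_le_right _ _) this
    · have hy1 : y ≤ 1 - ε := by linarith
      have := (gfun_strictAntiOn p hp).antitoneOn (mem_Icc.2 ⟨hy, by linarith⟩) hmemε hy1
      exact le_trans (min_le_left _ _) this
/-- **Lemma A.1.** For `r ≥ 0` let `A_r` be nonnegative random variables, `0 < q₁ < q₂`
and `f : [0,∞) → (0,∞)`. If `𝔼[A_r^{q₁}]^{1/q₁} ∼ f(r)` and `𝔼[A_r^{q₂}]^{1/q₂} ∼ f(r)`
as `r → ∞` (these moments being finite), then `A_r ∼ f(r)` in probability. -/
theorem equivalent_moments_implies_convergence_in_probability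
    {Ω : Type*} [MeasurableSpace Ω] (P : Measure Ω) [IsProbabilityMeasure P]
    (A : ℝ → Ω → ℝ) (hA0 : ∀ r ω, 0 ≤ A r ω) (hAmeas : ∀ r, Measurable (A r))
    (q₁ q₂ : ℝ) (hq₁ : 0 < q₁) (hq₁₂ : q₁ < q₂)
    (f : ℝ → ℝ) (hf : ∀ r, 0 ≤ r → 0 < f r)
    (hint₁ : ∀ r, Integrable (fun ω => A r ω ^ q₁) P)
    (hint₂ : ∀ r, Integrable (fun ω => A r ω ^ q₂) P)
    (h₁ : Tendsto (fun r => (∫ ω, A r ω ^ q₁ ∂P) ^ (1 / q₁) / f r) atTop (𝓝 1))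
    (h₂ : Tendsto (fun r => (∫ ω, A r ω ^ q₂ ∂P) ^ (1 / q₂) / f r) atTop (𝓝 1)) :
    ∀ ε : ℝ, 0 < ε →
      Tendsto (fun r => P {ω | ε ≤ |A r ω / f r - 1|}) atTop (𝓝 0) := by
  intro ε hε
  have hq₂ : 0 < q₂ := hq₁.trans hq₁₂
  set p : ℝ := q₂ / q₁ with hpdef
  have hp : 1 < p := (one_lt_div hq₁).2 hq₁₂
  -- thresholds
  set a : ℝ := max (1 - ε) 0 with hadef
  have ha0 : 0 ≤ a := le_max_right _ _
  have ha1 : a < 1 := max_lt (by linarith) one_pos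
  have haq : a ^ q₁ < 1 := Real.rpow_lt_one ha0 ha1 hq₁
  have haq0 : 0 ≤ a ^ q₁ := Real.rpow_nonneg ha0 q₁
  have h1ε : (1:ℝ) < (1 + ε) ^ q₁ :=
    (Real.one_lt_rpow_iff_of_pos (by linarith)).2 (Or.inl ⟨by linarith, hq₁⟩)
  set ε' : ℝ := min (1 - a ^ q₁) ((1 + ε) ^ q₁ - 1) with hε'def
  have hε'pos : 0 < ε' := lt_min (by linarith) (by linarith)
  have hε'1 : ε' ≤ 1 := le_trans (min_le_left _ _) (by linarith)
  obtain ⟨δ, hδ, hδle⟩ := gfun_lower p hp ε' hε'pos hε'1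
  -- pointwise bound on the bad set
  have hsub : ∀ r : ℝ, 0 ≤ r → ∀ ω, ε ≤ |A r ω / f r - 1| →
      δ ≤ gfun p ((A r ω / f r) ^ q₁) := by
    intro r hr ω hω
    have hx0 : 0 ≤ A r ω / f r := div_nonneg (hA0 r ω) (hf r hr).le
    have hxq0 : 0 ≤ (A r ω / f r) ^ q₁ := Real.rpow_nonneg hx0 q₁
    apply hδle _ hxq0
    rcases le_abs.mp hω with h | h
    · have h1 : (1+ε) ^ q₁ ≤ (A r ω / f r) ^ q₁ :=
        Real.rpow_le_rpow (by linarith) (by linarith) hq₁.le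
      have h2 : ε' ≤ (A r ω / f r) ^ q₁ - 1 :=
        le_trans (min_le_right _ _) (by linarith)
      exact le_trans h2 (le_abs_self _)
    · have hxa : A r ω / f r ≤ a := le_trans (by linarith) (le_max_left _ _)
      have h1 : (A r ω / f r) ^ q₁ ≤ a ^ q₁ := Real.rpow_le_rpow hx0 hxa hq₁.le
      have h2 : ε' ≤ -((A r ω / f r) ^ q₁ - 1) :=
        le_trans (min_le_left _ _) (by linarith)
      exact le_trans h2 (neg_le_abs _)
  -- integrand identity
  have hpt : ∀ r : ℝ, 0 ≤ r → ∀ ω, gfun p ((A r ω / f r) ^ q₁)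
      = A r ω ^ q₂ / f r ^ q₂ - 1 - p * (A r ω ^ q₁ / f r ^ q₁ - 1) := by
    intro r hr ω
    have hx0 : 0 ≤ A r ω / f r := div_nonneg (hA0 r ω) (hf r hr).le
    have e1 : ((A r ω / f r) ^ q₁) ^ p = (A r ω / f r) ^ q₂ := by
      rw [← Real.rpow_mul hx0]
      congr 1
      rw [hpdef, mul_comm, div_mul_cancel₀ _ hq₁.ne']
    simp only [gfun]
    rw [e1, Real.div_rpow (hA0 r ω) (hf r hr).le, Real.div_rpow (hA0 r ω) (hf r hr).le]
  -- normalized first moment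
  have hI₁0 : ∀ r, 0 ≤ ∫ ω, A r ω ^ q₁ ∂P :=
    fun r => integral_nonneg fun ω => Real.rpow_nonneg (hA0 r ω) q₁
  have hI₂0 : ∀ r, 0 ≤ ∫ ω, A r ω ^ q₂ ∂P :=
    fun r => integral_nonneg fun ω => Real.rpow_nonneg (hA0 r ω) q₂
  have hm₁ : Tendsto (fun r => (∫ ω, A r ω ^ q₁ ∂P) / f r ^ q₁) atTop (𝓝 1) := by
    have h := h₁.rpow_const (p := q₁) (Or.inr hq₁.le)
    rw [Real.one_rpow] at h
    refine h.congr' ?_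
    filter_upwards [eventually_ge_atTop (0:ℝ)] with r hr
    rw [Real.div_rpow (Real.rpow_nonneg (hI₁0 r) _) (hf r hr).le,
      ← Real.rpow_mul (hI₁0 r), one_div_mul_cancel hq₁.ne', Real.rpow_one]
  have hm₂ : Tendsto (fun r => (∫ ω, A r ω ^ q₂ ∂P) / f r ^ q₂) atTop (𝓝 1) := by
    have h := h₂.rpow_const (p := q₂) (Or.inr hq₂.le)
    rw [Real.one_rpow] at h
    refine h.congr' ?_
    filter_upwards [eventually_ge_atTop (0:ℝ)] with r hr
    rw [Real.div_rpow (Real.rpow_nonneg (hI₂0 r) _) (hf r hr).le,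
      ← Real.rpow_mul (hI₂0 r), one_div_mul_cancel hq₂.ne', Real.rpow_one]
  -- integral of g(Y) tends to 0
  have hJr : ∀ r : ℝ, 0 ≤ r → (∫ ω, gfun p ((A r ω / f r) ^ q₁) ∂P)
      = (∫ ω, A r ω ^ q₂ ∂P) / f r ^ q₂ - 1
        - p * ((∫ ω, A r ω ^ q₁ ∂P) / f r ^ q₁ - 1) := by
    intro r hr
    have i1 : Integrable (fun ω => A r ω ^ q₂ / f r ^ q₂) P := (hint₂ r).div_const _
    have i2 : Integrable (fun ω => A r ω ^ q₁ / f r ^ q₁) P := (hint₁ r).div_const _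
    have i3 : Integrable (fun ω => A r ω ^ q₂ / f r ^ q₂ - 1) P := i1.sub (integrable_const 1)
    have i4 : Integrable (fun ω => A r ω ^ q₁ / f r ^ q₁ - 1) P := i2.sub (integrable_const 1)
    have i5 : Integrable (fun ω => p * (A r ω ^ q₁ / f r ^ q₁ - 1)) P := i4.const_mul p
    rw [integral_congr_ae (Eventually.of_forall (hpt r hr))]
    rw [integral_sub i3 i5, integral_sub i1 (integrable_const 1), integral_const_mul,
      integral_sub i2 (integrable_const 1), integral_const, integral_div, integral_div]
    simp [measure_univ]
  have hGint : ∀ r : ℝ, 0 ≤ r → Integrable (fun ω => gfun p ((A r ω / f r) ^ q₁)) P := by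
    intro r hr
    have i1 : Integrable (fun ω => A r ω ^ q₂ / f r ^ q₂) P := (hint₂ r).div_const _
    have i2 : Integrable (fun ω => A r ω ^ q₁ / f r ^ q₁) P := (hint₁ r).div_const _
    exact (((i1.sub (integrable_const 1)).sub
      ((i2.sub (integrable_const 1)).const_mul p)).congr
      (Eventually.of_forall fun ω => (hpt r hr ω).symm))
  have hJ : Tendsto (fun r => ∫ ω, gfun p ((A r ω / f r) ^ q₁) ∂P) atTop (𝓝 0) := by
    have h0 : Tendsto (fun r => (∫ ω, A r ω ^ q₂ ∂P) / f r ^ q₂ - 1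
        - p * ((∫ ω, A r ω ^ q₁ ∂P) / f r ^ q₁ - 1)) atTop (𝓝 0) := by
      have := (hm₂.sub_const 1).sub ((hm₁.sub_const 1).const_mul p)
      simpa using this
    refine Tendsto.congr' ?_ h0
    filter_upwards [eventually_ge_atTop (0:ℝ)] with r hr
    exact (hJr r hr).symm
  -- Markov bound
  have hbound : ∀ᶠ r in atTop, (P {ω | ε ≤ |A r ω / f r - 1|}).toReal
      ≤ (∫ ω, gfun p ((A r ω / f r) ^ q₁) ∂P) / δ := by
    filter_upwards [eventually_ge_atTop (0:ℝ)] with r hr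
    have hmarkov := mul_meas_ge_le_integral_of_nonneg
      (ae_of_all _ fun ω => gfun_nonneg p hp
        (Real.rpow_nonneg (div_nonneg (hA0 r ω) (hf r hr).le) q₁))
      (hGint r hr) δ
    have hmono : P {ω | ε ≤ |A r ω / f r - 1|}
        ≤ P {ω | δ ≤ gfun p ((A r ω / f r) ^ q₁)} :=
      measure_mono fun ω hω => hsub r hr ω hω
    have h1 : (P {ω | ε ≤ |A r ω / f r - 1|}).toReal
        ≤ (P {ω | δ ≤ gfun p ((A r ω / f r) ^ q₁)}).toReal :=
      ENNReal.toReal_mono (measure_ne_top P _) hmono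
    refine h1.trans ((le_div_iff₀ hδ).2 ?_)
    calc (P {ω | δ ≤ gfun p ((A r ω / f r) ^ q₁)}).toReal * δ
        = δ * (P {ω | δ ≤ gfun p ((A r ω / f r) ^ q₁)}).toReal := mul_comm _ _
      _ ≤ _ := hmarkov
  have hT : Tendsto (fun r => (P {ω | ε ≤ |A r ω / f r - 1|}).toReal) atTop (𝓝 0) := by
    refine squeeze_zero' (Eventually.of_forall fun r => ENNReal.toReal_nonneg) hbound ?_
    simpa using hJ.div_const δ
  have := ENNReal.tendsto_ofReal hT
  rw [ENNReal.ofReal_zero] at this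
  exact this.congr fun r => ENNReal.ofReal_toReal (measure_ne_top P _)
end

section
/- Let f : [0,∞) → (0,∞) be a decreasing convex function with lim_{r→∞} f(r) = 0 and limsup_{r→∞} (−r · ∂⁺f(r)) / f(r) < ∞, where ∂⁺ denotes the right derivative. Let ℱ be a family of pairs (A,B) of [0,∞]-valued random variables such that lim_{r→∞} sup_{(A,B)∈ℱ} ℙ(A ≤ f(r), B ≤ r) = 0. For r ≥ 0 set ℱ_r = {A : (A,B) ∈ ℱ, 𝔼[B] ≤ r}. Then liminf_{r→∞} (inf_{A ∈ ℱ_r} 𝔼[A]) / f(r) ≥ 1. -/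
open MeasureTheory Filter Set Topology
open scoped ENNReal NNReal

set_option maxHeartbeats 1000000

/-- Right-derivative tangent line lies below a convex function on `Ici 0`. -/
lemma tangent_aux {f : ℝ → ℝ} (hconv : ConvexOn ℝ (Set.Ici 0) f) {x : ℝ} (hx : 0 < x) :
    ∀ y, 0 ≤ y → f x + derivWithin f (Set.Ici x) x * (y - x) ≤ f y := by
  have hmemx : x ∈ Set.Ici (0:ℝ) := le_of_lt hx
  have hsub : Set.Ioi x ⊆ Set.Ici (0:ℝ) \ {x} := by
    intro t ht
    exact ⟨le_of_lt (lt_trans hx ht), ne_of_gt ht⟩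
  have hmono : MonotoneOn (slope f x) (Set.Ioi x) :=
    (hconv.slope_mono hmemx).mono hsub
  have hlb : ∀ t ∈ Set.Ioi x, slope f x (x/2) ≤ slope f x t := by
    intro t ht
    have hmem2 : x/2 ∈ Set.Ici (0:ℝ) \ {x} := by
      constructor
      · simp only [Set.mem_Ici]; linarith
      · simp only [Set.mem_singleton_iff]; intro h; linarith
    exact (hconv.slope_mono hmemx) hmem2 (hsub ht) (by linarith [Set.mem_Ioi.mp ht])
  have hbdd : BddBelow (slope f x '' Set.Ioi x) := by
    refine ⟨slope f x (x/2), ?_⟩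
    rintro _ ⟨t, ht, rfl⟩
    exact hlb t ht
  set m := sInf (slope f x '' Set.Ioi x) with hm
  have htend : Tendsto (slope f x) (𝓝[>] x) (𝓝 m) :=
    hmono.tendsto_nhdsGT hbdd
  have hd : HasDerivWithinAt f m (Set.Ioi x) x :=
    (hasDerivWithinAt_iff_tendsto_slope' notMem_Ioi_self).mpr htend
  have hd' : HasDerivWithinAt f m (Set.Ici x) x := by
    rw [← Set.Ioi_insert]
    simpa using (hd.hasFDerivWithinAt.insert).hasDerivWithinAt
  have hdrw : derivWithin f (Set.Ici x) x = m :=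
    hd'.derivWithin (uniqueDiffOn_Ici x x Set.self_mem_Ici)
  rw [hdrw]
  intro y hy
  rcases lt_trichotomy y x with h | h | h
  · have hsl : slope f x y ≤ m := by
      refine le_csInf ⟨slope f x (x+1), ⟨x+1, by simp, rfl⟩⟩ ?_
      rintro _ ⟨t, ht, rfl⟩
      have hmemy : y ∈ Set.Ici (0:ℝ) \ {x} := by
        constructor
        · exact hy
        · simp only [Set.mem_singleton_iff]; intro hh; linarith
      exact (hconv.slope_mono hmemx) hmemy (hsub ht)
        (le_of_lt (lt_trans h (Set.mem_Ioi.mp ht)))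
    rw [slope_def_field] at hsl
    have hyx : y - x < 0 := by linarith
    -- (f y - f x)/(y - x) ≤ m  with  y - x < 0  gives m * (y-x) ≤ f y - f x
    have := (div_le_iff_of_neg hyx).mp hsl
    linarith
  · simp [h]
  · have hsl : m ≤ slope f x y := csInf_le hbdd ⟨y, h, rfl⟩
    rw [slope_def_field] at hsl
    have hyx : 0 < y - x := by linarith
    have := (le_div_iff₀ hyx).mp hsl
    linarith

/-- Layer-cake style bound in `ℝ≥0∞`. -/
lemma sum_layer {a : ℕ → ℝ≥0∞} (ha : ∀ i, a (i+1) ≤ a i) (x : ℝ≥0∞) (n : ℕ) :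
    (∑ i ∈ Finset.range n, if a i < x then a i - a (i+1) else 0) ≤ x := by
  have key : ∀ n, (∑ i ∈ Finset.range n, if a i < x then a i - a (i+1) else 0) + a n ⊓ x ≤ x := by
    intro n
    induction n with
    | zero => simpa using inf_le_right
    | succ n ih =>
      rw [Finset.sum_range_succ]
      by_cases h : a n < x
      · have h1 : a (n+1) ⊓ x = a (n+1) := inf_eq_left.mpr (le_trans (ha n) h.le)
        have h2 : a n ⊓ x = a n := inf_eq_left.mpr h.le
        rw [if_pos h, h1, add_assoc, tsub_add_cancel_of_le (ha n), ← h2]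
        exact ih
      · rw [if_neg h, add_zero]
        exact le_trans (add_le_add_right (inf_le_inf_right x (ha n)) _) ih
  exact le_trans (le_add_right (le_refl _)) (key n)

lemma chain_aux {f : ℝ → ℝ} (hconv : ConvexOn ℝ (Set.Ici 0) f)
    {C R : ℝ} (hC : 1 ≤ C) (hR : 1 ≤ R)
    (hder : ∀ u, R ≤ u → -(u * derivWithin f (Set.Ici u) u) ≤ C * f u) :
    ∀ k : ℕ, ∀ u, R ≤ u → f u ≤ 2^k * f (u * (1 + 1/(2*C))^k) := by
  have hC0 : (0:ℝ) < C := by linarith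
  have hβ : (0:ℝ) < 1/(2*C) := by positivity
  set β := 1/(2*C) with hβdef
  have hstep : ∀ u, R ≤ u → f u ≤ 2 * f (u * (1 + β)) := by
    intro u hu
    have hu0 : 0 < u := by linarith
    have htan := tangent_aux hconv hu0 (u * (1+β)) (by positivity)
    have hdu := hder u hu
    -- derivWithin f (Ici u) u * (u*(1+β) - u) = (u * d) * β ≥ -(C f u) * β = - f u / 2
    have h1 : u * (1+β) - u = u * β := by ring
    have h2 : -(C * f u) ≤ u * derivWithin f (Set.Ici u) u := by linarith
    have h3 : derivWithin f (Set.Ici u) u * (u * (1+β) - u)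
        = (u * derivWithin f (Set.Ici u) u) * β := by rw [h1]; ring
    have h4 : -(C * f u) * β ≤ (u * derivWithin f (Set.Ici u) u) * β :=
      mul_le_mul_of_nonneg_right h2 hβ.le
    have h5 : -(C * f u) * β = -(f u / 2) := by
      rw [hβdef]; field_simp
    nlinarith [htan, h3, h4, h5]
  intro k
  induction k with
  | zero => intro u hu; simp
  | succ k ih =>
    intro u hu
    have hu0 : 0 < u := by linarith
    have huk : R ≤ u * (1+β)^k := by
      have : (1:ℝ) ≤ (1+β)^k := one_le_pow₀ (by linarith)
      nlinarith
    calc f u ≤ 2^k * f (u * (1+β)^k) := ih u hu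
      _ ≤ 2^k * (2 * f (u * (1+β)^k * (1+β))) := by
          have := hstep (u * (1+β)^k) huk
          have h2k : (0:ℝ) < 2^k := by positivity
          nlinarith
      _ = 2^(k+1) * f (u * (1+β)^(k+1)) := by ring_nf

/-- **Lemma A.3.** Let `f : [0,∞) → ℝ₊` be decreasing and convex with `f(r) → 0` and
`limsup_{r→∞} (−r ∂⁺f(r))/f(r) < ∞`, and let `ℱ` be a family of pairs `(A,B)` of
`[0,∞]`-valued random variables with
`lim_{r→∞} sup_{(A,B)∈ℱ} ℙ(A ≤ f(r), B ≤ r) = 0`. Then, with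
`ℱ_r = {A : (A,B) ∈ ℱ, 𝔼 B ≤ r}`, one has `inf_{A∈ℱ_r} 𝔼 A ≳ f(r)` as `r → ∞`. -/
theorem lower_bound_from_two_sided_constraint
    {Ω : Type*} [MeasurableSpace Ω] (P : Measure Ω) [IsProbabilityMeasure P]
    (f : ℝ → ℝ) (hfpos : ∀ r, 0 ≤ r → 0 < f r)
    (hanti : AntitoneOn f (Set.Ici 0)) (hconv : ConvexOn ℝ (Set.Ici 0) f)
    (hlim : Tendsto f atTop (𝓝 0))
    (hder : IsBoundedUnder (· ≤ ·) atTop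
      fun r : ℝ => -(r * derivWithin f (Set.Ici r) r) / f r)
    (𝓕 : Set ((Ω → ℝ≥0∞) × (Ω → ℝ≥0∞)))
    (hmeas : ∀ p ∈ 𝓕, Measurable p.1 ∧ Measurable p.2)
    (h𝓕 : Tendsto (fun r : ℝ =>
        ⨆ p ∈ 𝓕, P {ω | p.1 ω ≤ ENNReal.ofReal (f r) ∧ p.2 ω ≤ ENNReal.ofReal r})
      atTop (𝓝 0)) :
    1 ≤ Filter.liminf (fun r : ℝ =>
        (⨅ p ∈ {p ∈ 𝓕 | ∫⁻ ω, p.2 ω ∂P ≤ ENNReal.ofReal r}, ∫⁻ ω, p.1 ω ∂P) /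
          ENNReal.ofReal (f r)) atTop := by
  classical
  have hanti' : ∀ {x y : ℝ}, 0 ≤ x → x ≤ y → f y ≤ f x := by
    intro x y hx hxy
    exact hanti (Set.mem_Ici.mpr hx) (Set.mem_Ici.mpr (le_trans hx hxy)) hxy
  -- constants
  obtain ⟨C₀, hC₀⟩ := hder
  rw [eventually_map] at hC₀
  set C := max C₀ 1 with hCdef
  have hC1 : (1:ℝ) ≤ C := le_max_right _ _
  have hC0 : (0:ℝ) < C := by linarith
  have hCev : ∀ᶠ r in atTop, -(r * derivWithin f (Set.Ici r) r) ≤ C * f r := by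
    filter_upwards [hC₀, eventually_ge_atTop (0:ℝ)] with r h1 h2
    have hfr := hfpos r h2
    have h1' : -(r * derivWithin f (Set.Ici r) r) / f r ≤ C := le_trans h1 (le_max_left _ _)
    calc -(r * derivWithin f (Set.Ici r) r)
        = (-(r * derivWithin f (Set.Ici r) r) / f r) * f r := by field_simp
      _ ≤ C * f r := mul_le_mul_of_nonneg_right h1' hfr.le
  obtain ⟨R₀, hR₀⟩ := eventually_atTop.mp hCev
  set R := max R₀ 1 with hRdef
  have hR1 : (1:ℝ) ≤ R := le_max_right _ _
  have hRder : ∀ u, R ≤ u → -(u * derivWithin f (Set.Ici u) u) ≤ C * f u :=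
    fun u hu => hR₀ u (le_trans (le_max_left _ _) hu)
  -- start
  rw [le_liminf_iff]
  intro c hc
  have hctop : c ≠ ⊤ := (hc.trans ENNReal.one_lt_top).ne
  set ε := (1 - c.toReal)/2 with hεdef
  have hc0 : 0 ≤ c.toReal := ENNReal.toReal_nonneg
  have hcR : c.toReal < 1 := by
    have h := (ENNReal.toReal_lt_toReal hctop (by simp : (1:ℝ≥0∞) ≠ ⊤)).mpr hc
    simpa using h
  have hε0 : 0 < ε := by rw [hεdef]; linarith
  have hε1 : ε < 1 := by rw [hεdef]; linarith
  have hcε : c < ENNReal.ofReal (1-ε) := by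
    conv_lhs => rw [← ENNReal.ofReal_toReal hctop]
    rw [ENNReal.ofReal_lt_ofReal_iff (by linarith)]
    rw [hεdef]; linarith
  -- parameters
  set δ := ε/(4*C) with hδdef
  have hδ0 : 0 < δ := by positivity
  set β := (1:ℝ)/(2*C) with hβdef
  have hβ0 : 0 < β := by positivity
  set k := ⌈2*C/δ⌉₊ with hkdef
  set K := (2:ℝ)^k with hKdef
  have hK0 : (0:ℝ) < K := by positivity
  have hgrow : (1:ℝ) ≤ δ*(1+β)^k := by
    have hkceil : 2*C/δ ≤ (k:ℝ) := Nat.le_ceil _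
    have hBern : 1 + (k:ℝ)*β ≤ (1+β)^k := one_add_mul_le_pow (by linarith : (-2:ℝ) ≤ β) k
    have h1δ : 1/δ ≤ (k:ℝ)*β := by
      have h := mul_le_mul_of_nonneg_right hkceil hβ0.le
      calc 1/δ = (2*C/δ)*β := by rw [hβdef]; field_simp
        _ ≤ (k:ℝ)*β := h
    have h2 : 1/δ ≤ (1+β)^k := by linarith
    calc (1:ℝ) = δ*(1/δ) := by field_simp
      _ ≤ δ*(1+β)^k := mul_le_mul_of_nonneg_left h2 hδ0.le
  set ε' := ε/(4*K) with hε'def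
  have hε'0 : 0 < ε' := by positivity
  -- threshold for the probability bound
  have hq0 : ∀ᶠ s in atTop,
      (⨆ p ∈ 𝓕, P {ω | p.1 ω ≤ ENNReal.ofReal (f s) ∧ p.2 ω ≤ ENNReal.ofReal s})
        < ENNReal.ofReal ε' :=
    h𝓕.eventually (gt_mem_nhds (ENNReal.ofReal_pos.mpr hε'0))
  obtain ⟨R₁, hR₁⟩ := eventually_atTop.mp hq0
  -- main eventual statement
  have hδatTop : Tendsto (fun r:ℝ => δ*r) atTop atTop :=
    Tendsto.const_mul_atTop hδ0 tendsto_id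
  filter_upwards [eventually_ge_atTop R, hδatTop.eventually_ge_atTop R,
    hδatTop.eventually_ge_atTop R₁] with r hrR hδrR hδrR₁
  have hr1 : (1:ℝ) ≤ r := le_trans hR1 hrR
  have hr0 : (0:ℝ) < r := by linarith
  have hfr : 0 < f r := hfpos r hr0.le
  have hδr0 : 0 < δ*r := by positivity
  -- the per-element bound
  have hmain : ∀ p ∈ 𝓕, (∫⁻ ω, p.2 ω ∂P) ≤ ENNReal.ofReal r →
      ENNReal.ofReal ((1-ε) * f r) ≤ ∫⁻ ω, p.1 ω ∂P := by
    intro p hp hB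
    obtain ⟨hAm, hBm⟩ := hmeas p hp
    set d := derivWithin f (Set.Ici r) r with hd
    set m := -d with hm
    have htan := tangent_aux hconv hr0
    have hm0 : 0 ≤ m := by
      have h1 := htan (r+1) (by linarith)
      have h2 : f (r+1) ≤ f r := hanti' hr0.le (by linarith)
      have h3 : (r+1) - r = 1 := by ring
      rw [h3, mul_one] at h1
      rw [hm]; linarith
    have hmr : m * r ≤ C * f r := by
      have h1 := hRder r hrR
      have h2 : m * r = -(r * d) := by rw [hm]; ring
      rw [h2]; exact h1
    -- levels
    set s : ℕ → ℝ := fun i => δ*r*(1+i) with hs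
    have hs0 : ∀ i, 0 < s i := by
      intro i
      have : (0:ℝ) < 1 + i := by positivity
      simp only [hs]; positivity
    have hsge : ∀ i, δ*r ≤ s i := by
      intro i
      have h1 : (0:ℝ) ≤ i := Nat.cast_nonneg i
      simp only [hs]; nlinarith
    have hsmono : ∀ i j : ℕ, i ≤ j → s i ≤ s j := by
      intro i j hij
      have : (i:ℝ) ≤ j := Nat.cast_le.mpr hij
      simp only [hs]; nlinarith
    have hsstep : ∀ i, s (i+1) = s i + δ*r := by
      intro i; simp only [hs]; push_cast; ring
    -- choose n
    have hstend : Tendsto (fun i:ℕ => s i) atTop atTop := by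
      apply Tendsto.const_mul_atTop hδr0
      exact tendsto_atTop_add_const_left _ _ tendsto_natCast_atTop_atTop
    have hftend : Tendsto (fun i : ℕ => f (s i)) atTop (𝓝 0) := hlim.comp hstend
    have hev : ∀ᶠ i : ℕ in atTop, f (s i) < ε/4 * f r :=
      hftend.eventually (gt_mem_nhds (by positivity))
    obtain ⟨n, hfsn, hn1⟩ := (hev.and (eventually_ge_atTop 1)).exists
    obtain ⟨n', rfl⟩ : ∃ n', n = n' + 1 := ⟨n - 1, by omega⟩
    set n := n' + 1 with hn
    -- ENNReal levels
    set a : ℕ → ℝ≥0∞ := fun i => ENNReal.ofReal (f (s i)) with ha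
    set cc : ℕ → ℝ≥0∞ := fun i => ENNReal.ofReal (f (s i) - f (s (i+1))) with hcc
    have hamono : ∀ i, a (i+1) ≤ a i := fun i =>
      ENNReal.ofReal_le_ofReal (hanti' (hs0 i).le (hsmono i (i+1) (by omega)))
    have hccval : ∀ i, cc i = a i - a (i+1) := fun i =>
      ENNReal.ofReal_sub _ (hfpos _ (hs0 (i+1)).le).le
    set E : ℕ → Set Ω := fun i => {ω | ENNReal.ofReal (f (s i)) < p.1 ω} with hE
    have hEmeas : ∀ i, MeasurableSet (E i) := fun i => hAm measurableSet_Ioi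
    set T : ℕ → Set Ω := fun i => {ω | p.2 ω ≤ ENNReal.ofReal (s i)} with hT
    have hTmeas : ∀ i, MeasurableSet (T i) := fun i => hBm measurableSet_Iic
    -- step 1
    have h1 : ∑ i ∈ Finset.range n, cc i * P (E i) ≤ ∫⁻ ω, p.1 ω ∂P := by
      calc ∑ i ∈ Finset.range n, cc i * P (E i)
          = ∫⁻ ω, ∑ i ∈ Finset.range n, (E i).indicator (fun _ => cc i) ω ∂P := by
            rw [lintegral_finset_sum _ (fun i _ => (measurable_const.indicator (hEmeas i)))]
            exact (Finset.sum_congr rfl fun i _ =>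
              lintegral_indicator_const (hEmeas i) _).symm
        _ ≤ ∫⁻ ω, p.1 ω ∂P := by
            apply lintegral_mono
            intro ω
            refine le_trans (le_of_eq ?_) (sum_layer hamono (p.1 ω) n)
            apply Finset.sum_congr rfl
            intro i _
            rw [Set.indicator_apply, ← hccval i]
            by_cases h : a i < p.1 ω
            · rw [if_pos h, if_pos (show ω ∈ E i from h)]
            · rw [if_neg h, if_neg (show ω ∉ E i from h)]
    -- step 2
    have h2 : ∀ i, P (T i) ≤ P (E i) + ENNReal.ofReal ε' := by
      intro i
      have hsub : T i ⊆ E i ∪ {ω | p.1 ω ≤ ENNReal.ofReal (f (s i)) ∧ p.2 ω ≤ ENNReal.ofReal (s i)} := by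
        intro ω hω
        rcases le_or_gt (p.1 ω) (ENNReal.ofReal (f (s i))) with h | h
        · exact Or.inr ⟨h, hω⟩
        · exact Or.inl h
      have hsR₁ : R₁ ≤ s i := le_trans hδrR₁ (hsge i)
      have hqi : P {ω | p.1 ω ≤ ENNReal.ofReal (f (s i)) ∧ p.2 ω ≤ ENNReal.ofReal (s i)}
          ≤ ENNReal.ofReal ε' := by
        refine le_trans ?_ (hR₁ (s i) hsR₁).le
        exact le_iSup₂ (f := fun (p : (Ω → ℝ≥0∞) × (Ω → ℝ≥0∞)) (_ : p ∈ 𝓕) =>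
          P {ω | p.1 ω ≤ ENNReal.ofReal (f (s i)) ∧ p.2 ω ≤ ENNReal.ofReal (s i)}) p hp
      calc P (T i) ≤ P (E i ∪ _) := measure_mono hsub
        _ ≤ P (E i) + _ := measure_union_le _ _
        _ ≤ P (E i) + ENNReal.ofReal ε' := add_le_add_right hqi _
    -- constants for step 3
    set Csn : ℝ≥0∞ := ENNReal.ofReal (f (s n) + m * (2*(δ*r))) with hCsn
    have hBfin : ∀ᵐ ω ∂P, p.2 ω ≠ ∞ := by
      have hfin : ∫⁻ ω, p.2 ω ∂P ≠ ∞ := (lt_of_le_of_lt hB ENNReal.ofReal_lt_top).ne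
      exact (ae_lt_top hBm hfin).mono fun ω h => h.ne
    -- step 3 : pointwise tangent bound
    have h3 : ∀ᵐ ω ∂P, ENNReal.ofReal (f r) + ENNReal.ofReal (m*r)
        ≤ (∑ i ∈ Finset.range n, (T i).indicator (fun _ => cc i) ω) + Csn
          + ENNReal.ofReal m * p.2 ω := by
      filter_upwards [hBfin] with ω hω
      set b := (p.2 ω).toReal with hb
      have hb0 : 0 ≤ b := ENNReal.toReal_nonneg
      have hBb : p.2 ω = ENNReal.ofReal b := (ENNReal.ofReal_toReal hω).symm
      set X := max b (δ*r) + δ*r with hX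
      have hmX : δ*r ≤ max b (δ*r) := le_max_right _ _
      have hX0 : 0 ≤ X := by rw [hX]; linarith
      set G := ∑ i ∈ Finset.range n, (if b ≤ s i then f (s i) - f (s (i+1)) else 0) with hG
      have hGterm : ∀ i, 0 ≤ (if b ≤ s i then f (s i) - f (s (i+1)) else 0) := by
        intro i
        split_ifs
        · have := hanti' (hs0 i).le (hsmono i (i+1) (by omega))
          linarith
        · exact le_rfl
      have hG0 : 0 ≤ G := Finset.sum_nonneg fun i _ => hGterm i
      have hfX : f X ≤ G + f (s n) := by
        by_cases hcase : b ≤ s n'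
        · have hex : ∃ i, b ≤ s i := ⟨n', hcase⟩
          have hjb : b ≤ s (Nat.find hex) := Nat.find_spec hex
          have hjn : Nat.find hex ≤ n' := Nat.find_min' hex hcase
          set j := Nat.find hex with hj
          have hsjX : s j ≤ X := by
            rcases Nat.eq_zero_or_pos j with hj0 | hjpos
            · have hs00 : s 0 = δ*r := by simp [hs]
              rw [hj0, hs00, hX]
              have := le_max_left b (δ*r); linarith
            · obtain ⟨j', hj'⟩ : ∃ j', j = j'+1 := ⟨j-1, by omega⟩
              have hj'lt : ¬ b ≤ s j' := Nat.find_min hex (by omega)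
              push_neg at hj'lt
              have hstepj := hsstep j'
              have hmb := le_max_left b (δ*r)
              rw [hj', hX]
              linarith
          have h6 : f X ≤ f (s j) := hanti' (hs0 j).le hsjX
          have h7 : f (s j) - f (s n) ≤ G := by
            have htel : ∑ i ∈ Finset.Ico j n, (f (s i) - f (s (i+1))) = f (s j) - f (s n) := by
              rw [Finset.sum_Ico_eq_sum_range]
              have h8 := Finset.sum_range_sub' (fun i => f (s (j + i))) (n - j)
              have h9 : j + (n - j) = n := by omega
              simpa [h9, add_assoc] using h8
            calc f (s j) - f (s n)
                = ∑ i ∈ Finset.Ico j n, (f (s i) - f (s (i+1))) := htel.symm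
              _ = ∑ i ∈ Finset.Ico j n, (if b ≤ s i then f (s i) - f (s (i+1)) else 0) := by
                  refine Finset.sum_congr rfl fun i hi => ?_
                  rw [if_pos (le_trans hjb (hsmono j i (Finset.mem_Ico.mp hi).1))]
              _ ≤ G := by
                  refine Finset.sum_le_sum_of_subset_of_nonneg ?_ fun i hi _ => hGterm i
                  intro x hx
                  exact Finset.mem_range.mpr (Finset.mem_Ico.mp hx).2
          linarith
        · push_neg at hcase
          have hXn : s n ≤ X := by
            have hstepn := hsstep n'
            have hmb := le_max_left b (δ*r)
            rw [hX]
            have : s n = s n' + δ*r := hstepn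
            linarith
          have := hanti' (hs0 n).le hXn
          linarith
      have htanX := htan X hX0
      have hXle : X ≤ b + 2*(δ*r) := by
        have h8 : max b (δ*r) ≤ b + δ*r := max_le (by linarith) (by linarith)
        rw [hX]; linarith
      have hkey : f r + m * r ≤ G + (f (s n) + m*(2*(δ*r))) + m * b := by
        have h9 : f r + d * (X - r) ≤ f X := htanX
        have h10 : m * X ≤ m * (b + 2*(δ*r)) := mul_le_mul_of_nonneg_left hXle hm0
        have h11 : d = -m := by rw [hm]; ring
        rw [h11] at h9
        nlinarith [hfX]
      calc ENNReal.ofReal (f r) + ENNReal.ofReal (m*r)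
          = ENNReal.ofReal (f r + m*r) := (ENNReal.ofReal_add hfr.le (by positivity)).symm
        _ ≤ ENNReal.ofReal (G + (f (s n) + m*(2*(δ*r))) + m*b) := ENNReal.ofReal_le_ofReal hkey
        _ = ENNReal.ofReal G + ENNReal.ofReal (f (s n) + m*(2*(δ*r))) + ENNReal.ofReal (m*b) := by
            have hfsn0 : 0 ≤ f (s n) := (hfpos _ (hs0 n).le).le
            have hterm0 : 0 ≤ f (s n) + m*(2*(δ*r)) :=
              add_nonneg hfsn0 (mul_nonneg hm0 (by positivity))
            rw [ENNReal.ofReal_add (add_nonneg hG0 hterm0) (mul_nonneg hm0 hb0),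
              ENNReal.ofReal_add hG0 hterm0]
        _ = (∑ i ∈ Finset.range n, (T i).indicator (fun _ => cc i) ω) + Csn
            + ENNReal.ofReal m * p.2 ω := by
            congr 1
            · congr 1
              rw [hG, ENNReal.ofReal_sum_of_nonneg (fun i _ => hGterm i)]
              refine Finset.sum_congr rfl fun i _ => ?_
              rw [Set.indicator_apply]
              have hiff : ω ∈ T i ↔ b ≤ s i := by
                simp only [hT, Set.mem_setOf_eq, hBb]
                exact ENNReal.ofReal_le_ofReal_iff (hs0 i).le
              by_cases hcond : b ≤ s i
              · rw [if_pos hcond, if_pos (hiff.mpr hcond)]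
              · rw [if_neg hcond, if_neg (fun hcont => hcond (hiff.mp hcont)),
                  ENNReal.ofReal_zero]
            · rw [ENNReal.ofReal_mul hm0, hBb]
    -- step 4 : integrate
    have h4 : ENNReal.ofReal (f r) + ENNReal.ofReal (m*r)
        ≤ (∑ i ∈ Finset.range n, cc i * P (T i)) + Csn + ENNReal.ofReal (m*r) := by
      have hconst : ∫⁻ _, (ENNReal.ofReal (f r) + ENNReal.ofReal (m*r)) ∂P
          = ENNReal.ofReal (f r) + ENNReal.ofReal (m*r) := by
        simp [lintegral_const]
      calc ENNReal.ofReal (f r) + ENNReal.ofReal (m*r)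
          = ∫⁻ _, (ENNReal.ofReal (f r) + ENNReal.ofReal (m*r)) ∂P := hconst.symm
        _ ≤ ∫⁻ ω, ((∑ i ∈ Finset.range n, (T i).indicator (fun _ => cc i) ω) + Csn
            + ENNReal.ofReal m * p.2 ω) ∂P := lintegral_mono_ae h3
        _ = (∑ i ∈ Finset.range n, cc i * P (T i)) + Csn
            + ENNReal.ofReal m * ∫⁻ ω, p.2 ω ∂P := by
            rw [lintegral_add_right _ (hBm.const_mul _),
              lintegral_add_right _ measurable_const,
              lintegral_finset_sum _ (fun i _ => (measurable_const.indicator (hTmeas i))),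
              lintegral_const_mul _ hBm, lintegral_const]
            simp only [measure_univ, mul_one]
            congr 1
            congr 1
            exact Finset.sum_congr rfl fun i _ => lintegral_indicator_const (hTmeas i) _
        _ ≤ (∑ i ∈ Finset.range n, cc i * P (T i)) + Csn + ENNReal.ofReal (m*r) := by
            gcongr
            rw [ENNReal.ofReal_mul hm0]
            exact mul_le_mul_right hB _
    -- step 5 : combine with step 2
    have hccsum : ∑ i ∈ Finset.range n, cc i ≤ ENNReal.ofReal (f (δ*r)) := by
      have hsum : ∑ i ∈ Finset.range n, cc i
          = ENNReal.ofReal (∑ i ∈ Finset.range n, (f (s i) - f (s (i+1)))) := by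
        rw [ENNReal.ofReal_sum_of_nonneg]
        intro i _
        have := hanti' (hs0 i).le (hsmono i (i+1) (by omega))
        linarith
      rw [hsum, Finset.sum_range_sub' (fun i => f (s i))]
      apply ENNReal.ofReal_le_ofReal
      have hfsn0 := (hfpos _ (hs0 n).le).le
      have hs00 : s 0 = δ*r := by simp [hs]
      rw [hs00]
      linarith
    have h5 : ∑ i ∈ Finset.range n, cc i * P (T i)
        ≤ (∫⁻ ω, p.1 ω ∂P) + ENNReal.ofReal (f (δ*r)) * ENNReal.ofReal ε' := by
      calc ∑ i ∈ Finset.range n, cc i * P (T i)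
          ≤ ∑ i ∈ Finset.range n, (cc i * P (E i) + cc i * ENNReal.ofReal ε') := by
            refine Finset.sum_le_sum fun i _ => ?_
            rw [← mul_add]
            exact mul_le_mul_right (h2 i) _
        _ = (∑ i ∈ Finset.range n, cc i * P (E i))
            + (∑ i ∈ Finset.range n, cc i) * ENNReal.ofReal ε' := by
            rw [Finset.sum_add_distrib, Finset.sum_mul]
        _ ≤ (∫⁻ ω, p.1 ω ∂P) + ENNReal.ofReal (f (δ*r)) * ENNReal.ofReal ε' :=
            add_le_add h1 (mul_le_mul_left hccsum _)
    -- step 6 : cancel and error bound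
    have h6 : ENNReal.ofReal (f r)
        ≤ (∫⁻ ω, p.1 ω ∂P) + (ENNReal.ofReal (f (δ*r)) * ENNReal.ofReal ε' + Csn) := by
      rw [← ENNReal.add_le_add_iff_right (show ENNReal.ofReal (m*r) ≠ ∞ from ENNReal.ofReal_ne_top)]
      calc ENNReal.ofReal (f r) + ENNReal.ofReal (m*r)
          ≤ (∑ i ∈ Finset.range n, cc i * P (T i)) + Csn + ENNReal.ofReal (m*r) := h4
        _ ≤ ((∫⁻ ω, p.1 ω ∂P) + ENNReal.ofReal (f (δ*r)) * ENNReal.ofReal ε') + Csn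
            + ENNReal.ofReal (m*r) := add_le_add (add_le_add h5 le_rfl) le_rfl
        _ = ((∫⁻ ω, p.1 ω ∂P) + (ENNReal.ofReal (f (δ*r)) * ENNReal.ofReal ε' + Csn))
            + ENNReal.ofReal (m*r) := by congr 1; exact add_assoc _ _ _
    have herr : ENNReal.ofReal (f (δ*r)) * ENNReal.ofReal ε' + Csn
        ≤ ENNReal.ofReal (ε * f r) := by
      have e1 : f (δ*r) * ε' ≤ ε/4 * f r := by
        have hchain := chain_aux hconv hC1 hR1 hRder k (δ*r) hδrR
        have hge : r ≤ δ*r*(1+β)^k := by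
          have h12 : δ*r*(1+β)^k = (δ*(1+β)^k)*r := by ring
          rw [h12]
          nlinarith
        have hle2 : f (δ*r*(1+β)^k) ≤ f r := hanti' hr0.le hge
        have hfδ : f (δ*r) ≤ K * f r := by
          rw [hKdef]
          calc f (δ*r) ≤ 2^k * f (δ*r*(1+β)^k) := hchain
            _ ≤ 2^k * f r := by
                have h2k : (0:ℝ) < 2^k := by positivity
                nlinarith
        calc f (δ*r) * ε' ≤ (K * f r) * ε' :=
            mul_le_mul_of_nonneg_right hfδ hε'0.le
          _ = ε/4 * f r := by rw [hε'def]; field_simp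
      have e2 : f (s n) + m*(2*(δ*r)) ≤ 3*ε/4 * f r := by
        have hmδ : m * (2*(δ*r)) ≤ ε/2 * f r := by
          have h13 : m*(2*(δ*r)) = (m*r) * (2*δ) := by ring
          rw [h13]
          calc (m*r)*(2*δ) ≤ (C * f r)*(2*δ) :=
              mul_le_mul_of_nonneg_right hmr (by positivity)
            _ = ε/2 * f r := by rw [hδdef]; field_simp; ring
        linarith [hfsn.le]
      calc ENNReal.ofReal (f (δ*r)) * ENNReal.ofReal ε' + Csn
          = ENNReal.ofReal (f (δ*r) * ε') + Csn := by
            rw [ENNReal.ofReal_mul (hfpos _ hδr0.le).le]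
        _ ≤ ENNReal.ofReal (ε/4 * f r) + ENNReal.ofReal (3*ε/4 * f r) :=
            add_le_add (ENNReal.ofReal_le_ofReal e1) (ENNReal.ofReal_le_ofReal e2)
        _ = ENNReal.ofReal (ε * f r) := by
            rw [← ENNReal.ofReal_add (by positivity) (by positivity)]
            ring_nf
    have h7 : ENNReal.ofReal (f r) ≤ (∫⁻ ω, p.1 ω ∂P) + ENNReal.ofReal (ε * f r) :=
      le_trans h6 (add_le_add le_rfl herr)
    have hsplit : ENNReal.ofReal ((1-ε)*f r) + ENNReal.ofReal (ε * f r)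
        = ENNReal.ofReal (f r) := by
      rw [← ENNReal.ofReal_add (by nlinarith) (by positivity)]
      ring_nf
    rw [← ENNReal.add_le_add_iff_right
      (show ENNReal.ofReal (ε * f r) ≠ ∞ from ENNReal.ofReal_ne_top), hsplit]
    exact h7
  -- conclude
  have hinf : ENNReal.ofReal ((1-ε) * f r)
      ≤ ⨅ p ∈ {p ∈ 𝓕 | ∫⁻ ω, p.2 ω ∂P ≤ ENNReal.ofReal r}, ∫⁻ ω, p.1 ω ∂P := by
    refine le_iInf fun p => le_iInf fun hp => ?_
    exact hmain p hp.1 hp.2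
  have hfr_ne0 : ENNReal.ofReal (f r) ≠ 0 := by
    simp [ENNReal.ofReal_eq_zero]; linarith
  have hfr_netop : ENNReal.ofReal (f r) ≠ ∞ := ENNReal.ofReal_ne_top
  calc c < ENNReal.ofReal (1-ε) := hcε
    _ = ENNReal.ofReal ((1-ε) * f r) / ENNReal.ofReal (f r) := by
        rw [ENNReal.ofReal_mul (by linarith), mul_div_assoc,
          ENNReal.div_self hfr_ne0 hfr_netop, mul_one]
    _ ≤ _ := ENNReal.div_le_div_right hinf _
end
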